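/- Singular integration: let r ∈ ℕ₀, let 𝖪 be a regularising kernel of order (0,r) (i.e. a β-regularising kernel for some β > 0, with m = 0), and let f ∈ 𝒟'(ℝ^d) be a distribution of order r. Then the series 𝖪f(ψ) := Σ_{n≥0} f(𝖪_n^*ψ) converges for every test function ψ, and 𝖪f is a well-defined distribution of order r. Moreover, if 𝖪 is a regularising kernel of order (0,r) for every r ∈ ℕ₀, then 𝖪f is well-defined for every distribution f ∈ 𝒟'(ℝ^d). -/

import Mathlib

open MeasureTheory Metric Filter
open scoped Classical Pointwise Topology

noncomputable section

/-- Euclidean space `ℝ^d`. -/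
abbrev Ed (d : ℕ) := EuclideanSpace ℝ (Fin d)

/-- Multi-indices `k ∈ ℕ₀^d`. -/
abbrev MIdx (d : ℕ) := Fin d → ℕ

variable {d : ℕ}

/-- Degree `|k|` of a multi-index. -/
def mdeg (k : MIdx d) : ℕ := ∑ i, k i

/-- Factorial `k!` of a multi-index. -/
def mfact (k : MIdx d) : ℕ := ∏ i, Nat.factorial (k i)

/-- Monomial `v^k`. -/
def mpow (v : Ed d) (k : MIdx d) : ℝ := ∏ i, (v i) ^ (k i)

/-- Partial (line) derivative in coordinate `i`. -/
def pd (i : Fin d) (f : Ed d → ℝ) : Ed d → ℝ :=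
  fun x => lineDeriv ℝ f x (EuclideanSpace.single i (1:ℝ))

/-- Iterated partial derivative `∂^k`. -/
def mderiv (k : MIdx d) (f : Ed d → ℝ) : Ed d → ℝ :=
  (List.finRange d).foldr (fun i g => (pd i)^[k i] g) f

/-- Smooth compactly supported test function. -/
def IsTest (φ : Ed d → ℝ) : Prop := ContDiff ℝ (⊤ : ℕ∞) φ ∧ HasCompactSupport φ

/-- The `C^r` norm `max_{|k| ≤ r} ‖∂^k φ‖_∞`. -/
def crNorm (r : ℕ) (φ : Ed d → ℝ) : ℝ :=
  ⨆ k : {k : MIdx d // mdeg k ≤ r}, ⨆ x : Ed d, |mderiv k.1 φ x|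

/-- Generalized functions: arbitrary functionals on functions on `ℝ^d`. -/
abbrev DFunc (d : ℕ) := (Ed d → ℝ) → ℝ

/-- `f` is a distribution in `𝒟'(ℝ^d)`: linear on test functions and,
on every compact, bounded by some `C^r` norm. -/
def IsDistribution (f : DFunc d) : Prop :=
  (∀ φ ψ : Ed d → ℝ, IsTest φ → IsTest ψ → f (φ + ψ) = f φ + f ψ) ∧
  (∀ (c : ℝ) (φ : Ed d → ℝ), IsTest φ → f (c • φ) = c * f φ) ∧
  (∀ K : Set (Ed d), IsCompact K → ∃ (r : ℕ) (C : ℝ),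
    ∀ φ : Ed d → ℝ, IsTest φ → tsupport φ ⊆ K → |f φ| ≤ C * crNorm r φ)

/-- `f` is a distribution of order `r` (bound by the `C^r` norm on every compact). -/
def DistOrder (f : DFunc d) (r : ℕ) : Prop :=
  ∀ K : Set (Ed d), IsCompact K → ∃ C : ℝ,
    ∀ φ : Ed d → ℝ, IsTest φ → tsupport φ ⊆ K → |f φ| ≤ C * crNorm r φ

/-- `φ` is of class `C^r`: all iterated coordinate-partials up to order `r`
exist and are continuous. -/
def IsCr (r : ℕ) (φ : Ed d → ℝ) : Prop :=
  ∀ k : MIdx d, mdeg k ≤ r →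
    Continuous (mderiv k φ) ∧
    (mdeg k < r → ∀ (i : Fin d) (x : Ed d),
      LineDifferentiableAt ℝ (mderiv k φ) x (EuclideanSpace.single i (1:ℝ)))

/-- The functional `f` acts canonically (linearly, with local order-`r` bounds) on all
compactly supported `C^r` functions; i.e. `f` incorporates the canonical extension of a
distribution of order `r`. -/
def OrderExt (f : DFunc d) (r : ℕ) : Prop :=
  (∀ φ ψ : Ed d → ℝ, IsCr r φ → HasCompactSupport φ → IsCr r ψ → HasCompactSupport ψ →
      f (φ + ψ) = f φ + f ψ) ∧
  (∀ (c : ℝ) (φ : Ed d → ℝ), IsCr r φ → HasCompactSupport φ → f (c • φ) = c * f φ) ∧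
  (∀ K : Set (Ed d), IsCompact K → ∃ C : ℝ,
    ∀ φ : Ed d → ℝ, IsCr r φ → HasCompactSupport φ → tsupport φ ⊆ K → |f φ| ≤ C * crNorm r φ)

/-- The scaled recentred test function `φ_x^λ(y) = λ^{-d} φ(λ^{-1}(y-x))`. -/
def scTF (φ : Ed d → ℝ) (x : Ed d) (l : ℝ) : Ed d → ℝ :=
  fun y => (l ^ d)⁻¹ * φ (l⁻¹ • (y - x))

/-- The class `𝓑^r` of smooth test functions supported in the closed unit ball with
all derivatives of order `≤ r` bounded by one. -/
def TB (d r : ℕ) : Set (Ed d → ℝ) :=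
  {φ | IsTest φ ∧ tsupport φ ⊆ closedBall (0 : Ed d) 1 ∧
    ∀ k : MIdx d, mdeg k ≤ r → ∀ x, |mderiv k φ x| ≤ 1}

/-- The class `𝓑_γ` of smooth test functions supported in the closed unit ball which
annihilate all monomials of degree `≤ γ`. -/
def TAnn (d : ℕ) (γ : ℝ) : Set (Ed d → ℝ) :=
  {φ | IsTest φ ∧ tsupport φ ⊆ closedBall (0 : Ed d) 1 ∧
    ∀ k : MIdx d, (mdeg k : ℝ) ≤ γ → (∫ z, φ z * mpow z k) = 0}

/-- The class `𝓑^r_γ = 𝓑^r ∩ 𝓑_γ`. -/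
def TBAnn (d r : ℕ) (γ : ℝ) : Set (Ed d → ℝ) := TB d r ∩ TAnn d γ

/-- A germ: a family of functionals indexed by base points. -/
abbrev GermF (d : ℕ) := Ed d → DFunc d

/-- A germ of distributions, measurable in the base point. -/
def IsGerm (F : GermF d) : Prop :=
  (∀ x, IsDistribution (F x)) ∧ ∀ φ : Ed d → ℝ, IsTest φ → Measurable (fun x => F x φ)

/-- Homogeneity bound with constant `C`: `|F_x(φ_x^λ)| ≤ C λ^ᾱ` on `(K, λ̄)` at order `r`. -/
def HomB (F : GermF d) (a : ℝ) (r : ℕ) (K : Set (Ed d)) (lb C : ℝ) : Prop :=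
  ∀ x ∈ K, ∀ l : ℝ, 0 < l → l ≤ lb → ∀ φ ∈ TB d r, |F x (scTF φ x l)| ≤ C * l ^ a

/-- Coherence bound with constant `C`:
`|(F_y - F_x)(φ_x^λ)| ≤ C λ^α (|y-x|+λ)^{γ-α}` on `(K, λ̄)` at order `r`. -/
def CohB (F : GermF d) (a g : ℝ) (r : ℕ) (K : Set (Ed d)) (lb C : ℝ) : Prop :=
  ∀ x ∈ K, ∀ y ∈ K, ∀ l : ℝ, 0 < l → l ≤ lb → ∀ φ ∈ TB d r,
    |F y (scTF φ x l) - F x (scTF φ x l)| ≤ C * l ^ a * (dist y x + l) ^ (g - a)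

/-- `F` is `ᾱ`-homogeneous of order `r`. -/
def Homog (F : GermF d) (a : ℝ) (r : ℕ) : Prop :=
  ∀ K : Set (Ed d), IsCompact K → ∀ lb : ℝ, 1 ≤ lb → ∃ C, HomB F a r K lb C

/-- `F` is `(α, γ)`-coherent of order `r`. -/
def Coh (F : GermF d) (a g : ℝ) (r : ℕ) : Prop :=
  ∀ K : Set (Ed d), IsCompact K → ∀ lb : ℝ, 1 ≤ lb → ∃ C, CohB F a g r K lb C

/-- Weak homogeneity bound with constant `C` (test functions annihilating polynomials
at small scales, plus a scale-one bound on all of `𝓑^r`). -/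
def WHomB (F : GermF d) (a : ℝ) (r : ℕ) (K : Set (Ed d)) (lb C : ℝ) : Prop :=
  (∀ x ∈ K, ∀ l : ℝ, 0 < l → l ≤ lb → ∀ φ ∈ TBAnn d r a,
      |F x (scTF φ x l)| ≤ C * l ^ a) ∧
  (∀ x ∈ K, ∀ ψ ∈ TB d r, |F x (scTF ψ x 1)| ≤ C)

/-- Weak coherence bound with constant `C`. -/
def WCohB (F : GermF d) (a g : ℝ) (r : ℕ) (K : Set (Ed d)) (lb C : ℝ) : Prop :=
  (∀ x ∈ K, ∀ y ∈ K, ∀ l : ℝ, 0 < l → l ≤ lb → ∀ φ ∈ TBAnn d r g,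
      |F y (scTF φ x l) - F x (scTF φ x l)| ≤ C * l ^ a * (dist y x + l) ^ (g - a)) ∧
  (∀ x ∈ K, ∀ y ∈ K, ∀ ψ ∈ TB d r, |F y (scTF ψ x 1) - F x (scTF ψ x 1)| ≤ C)

/-- `F` is weakly `ᾱ`-homogeneous of order `r`. -/
def WHomog (F : GermF d) (a : ℝ) (r : ℕ) : Prop :=
  ∀ K : Set (Ed d), IsCompact K → ∀ lb : ℝ, 1 ≤ lb → ∃ C, WHomB F a r K lb C

/-- `F` is weakly `(α,γ)`-coherent of order `r`. -/
def WCoh (F : GermF d) (a g : ℝ) (r : ℕ) : Prop :=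
  ∀ K : Set (Ed d), IsCompact K → ∀ lb : ℝ, 1 ≤ lb → ∃ C, WCohB F a g r K lb C

/-- The canonical order `r_{ᾱ,α} = min{n ∈ ℕ₀ : n > max(-ᾱ, -α)}`. -/
def rJ (a b : ℝ) : ℕ := (⌊max (-a) (-b)⌋ + 1).toNat

/-- Joint homogeneity-and-coherence bound at the canonical order. -/
def JointB (F : GermF d) (ab a g : ℝ) (K : Set (Ed d)) (lb C : ℝ) : Prop :=
  HomB F ab (rJ ab a) K lb C ∧ CohB F a g (rJ ab a) K lb C

/-- Joint weak homogeneity-and-coherence bound at the canonical order. -/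
def WJointB (F : GermF d) (ab a g : ℝ) (K : Set (Ed d)) (lb C : ℝ) : Prop :=
  WHomB F ab (rJ ab a) K lb C ∧ WCohB F a g (rJ ab a) K lb C

/-- `R` is a `γ`-reconstruction of the `(α,γ)`-coherent germ `F`. -/
def IsRec (F : GermF d) (R : DFunc d) (a g : ℝ) : Prop :=
  ∀ r : ℕ, -a < (r : ℝ) → ∀ K : Set (Ed d), IsCompact K → ∃ C : ℝ,
    ∀ x ∈ K, ∀ l : ℝ, 0 < l → l ≤ 1 → ∀ φ ∈ TB d r,
      |F x (scTF φ x l) - R (scTF φ x l)| ≤ C * l ^ g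

/-- Mixed partial derivative `∂_1^k ∂_2^l K(x,y)` of a kernel. -/
def mixDeriv (k l : MIdx d) (Kf : Ed d → Ed d → ℝ) (x y : Ed d) : ℝ :=
  mderiv k (fun x' => mderiv l (fun y' => Kf x' y') y) x

/-- The kernel `K(x,y)` is of class `C^{m,r}` (mixed partials `∂_1^k ∂_2^l`, `|k| ≤ m`,
`|l| ≤ r`, exist and are continuous). -/
def IsCmr (m r : ℕ) (Kf : Ed d → Ed d → ℝ) : Prop :=
  ∀ k l : MIdx d, mdeg k ≤ m → mdeg l ≤ r →
    Continuous (fun p : Ed d × Ed d => mixDeriv k l Kf p.1 p.2) ∧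
    (mdeg k < m → ∀ (i : Fin d) (x y : Ed d),
      LineDifferentiableAt ℝ (fun x' => mixDeriv k l Kf x' y) x
        (EuclideanSpace.single i (1:ℝ))) ∧
    (mdeg l < r → ∀ (j : Fin d) (x y : Ed d),
      LineDifferentiableAt ℝ (mderiv l (fun y' => Kf x y')) y
        (EuclideanSpace.single j (1:ℝ)))

/-- `Kn` is the dyadic decomposition of a `β`-regularising kernel of order `(m,r)`
with range `ρ` (Definition 2.3 of the paper). -/
def RegKer (d : ℕ) (β : ℝ) (m r : ℕ) (ρ : ℝ) (Kn : ℕ → Ed d → Ed d → ℝ) : Prop :=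
  (∀ n, IsCmr m r (Kn n)) ∧
  (∀ n x y, Kn n x y ≠ 0 → dist x y ≤ ρ * 2 ^ (-(n : ℝ))) ∧
  (∀ K : Set (Ed d), IsCompact K → ∃ c : ℝ, 0 < c ∧
    (∀ n, ∀ k l : MIdx d, mdeg k ≤ m → mdeg l ≤ r → ∀ x ∈ K, ∀ y ∈ K,
      |mixDeriv k l (Kn n) x y| ≤
        c * 2 ^ ((((d : ℝ) - β + (mdeg l : ℝ) + (mdeg k : ℝ))) * n)) ∧
    (∀ n, ∀ k l : MIdx d, mdeg k ≤ r → mdeg l ≤ r → ∀ y ∈ K,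
      |∫ x, mpow (y - x) l * mderiv k (fun y' => Kn n x y') y| ≤ c * 2 ^ (-(β * (n : ℝ)))))

/-- `K_n^* ψ (y) = ∫ ψ(x) K_n(x,y) dx`. -/
def kstar (Kf : Ed d → Ed d → ℝ) (ψ : Ed d → ℝ) : Ed d → ℝ :=
  fun y => ∫ x, ψ x * Kf x y

/-- `g = 𝖪 f`, i.e. `g(ψ) = Σ_n f(K_n^* ψ)` (with convergence) on test functions. -/
def KInt (Kn : ℕ → Ed d → Ed d → ℝ) (f g : DFunc d) : Prop :=
  ∀ ψ : Ed d → ℝ, IsTest ψ → HasSum (fun n => f (kstar (Kn n) ψ)) (g ψ)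

/-- The kernel decomposition preserves polynomials at level `γ`. -/
def PresPoly (Kn : ℕ → Ed d → Ed d → ℝ) (γ : ℝ) : Prop :=
  ∀ n, ∀ k : MIdx d, (mdeg k : ℝ) ≤ γ →
    ∃ p : MvPolynomial (Fin d) ℝ, p.totalDegree ≤ mdeg k ∧
      ∀ x : Ed d, (∫ y, Kn n x y * mpow y k) = MvPolynomial.eval (fun i => x i) p

/-- Distributional derivative `D^k f (φ) = (-1)^{|k|} f(∂^k φ)`. -/
def distDeriv (k : MIdx d) (f : DFunc d) : DFunc d :=
  fun φ => (-1 : ℝ) ^ (mdeg k) * f (mderiv k φ)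

/-- `η ∈ 𝒟` with `∫ η = 1` and vanishing moments of orders `1 ≤ |l| < δ`. -/
def GoodEta (δ : ℝ) (η : Ed d → ℝ) : Prop :=
  IsTest η ∧ (∫ z, η z) = 1 ∧
    ∀ k : MIdx d, 1 ≤ mdeg k → (mdeg k : ℝ) < δ → (∫ z, η z * mpow z k) = 0

/-- `v` is the pointwise derivative `D^k f(x)`, defined through the limit
`lim_{λ↓0} D^k f(η_x^λ)` for every admissible mollifier `η`. -/
def HasPtDeriv (f : DFunc d) (δ : ℝ) (k : MIdx d) (x : Ed d) (v : ℝ) : Prop :=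
  ∀ η : Ed d → ℝ, GoodEta δ η →
    Tendsto (fun l : ℝ => distDeriv k f (scTF η x l)) (nhdsWithin 0 (Set.Ioi 0)) (nhds v)

/-- The Taylor polynomial `Σ_{|k| < δ} c_k (·-x)^k / k!`, viewed as the functional
`ψ ↦ Σ_{|k| < δ} c_k ∫ ψ(y) (y-x)^k / k! dy`. -/
def taylorF (δ : ℝ) (c : MIdx d → ℝ) (x : Ed d) : DFunc d :=
  fun ψ => ∑ᶠ k ∈ {k : MIdx d | (mdeg k : ℝ) < δ},
    c k * ((∫ y, ψ y * mpow (y - x) k) / (mfact k))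

/-- The smallest positive integer `> -γ` (used in Hölder–Zygmund spaces for `γ < 0`). -/
def rNeg (γ : ℝ) : ℕ := (⌊-γ + 1⌋).toNat

/-- The Hölder–Zygmund bound with constant `C` on the compact `K` (with `λ̄ = 1`). -/
def ZBound (γ : ℝ) (f : DFunc d) (K : Set (Ed d)) (C : ℝ) : Prop :=
  (γ < 0 → ∀ x ∈ K, ∀ l : ℝ, 0 < l → l ≤ 1 → ∀ φ ∈ TB d (rNeg γ),
    |f (scTF φ x l)| ≤ C * l ^ γ) ∧
  (0 ≤ γ →
    (∀ x ∈ K, ∀ ψ ∈ TB d 0, |f (scTF ψ x 1)| ≤ C) ∧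
    (∀ x ∈ K, ∀ l : ℝ, 0 < l → l ≤ 1 → ∀ φ ∈ TBAnn d 0 γ,
      |f (scTF φ x l)| ≤ C * l ^ γ))

/-- Membership in the local Hölder–Zygmund space `𝒵^γ`. -/
def MemZ (γ : ℝ) (f : DFunc d) : Prop :=
  IsDistribution f ∧ ∀ K : Set (Ed d), IsCompact K → ∃ C, ZBound γ f K C

/-- `(Pg, Gg)` is a model with homogeneities `α` of order `rP`, with index set `S`. -/
def IsModelOn {ι : Type} (S : Finset ι) (Pg : ι → GermF d)
    (Gg : ι → ι → Ed d → Ed d → ℝ) (α : ι → ℝ) (rP : ℕ) : Prop :=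
  (∀ i ∈ S, IsGerm (Pg i)) ∧
  (∀ i ∈ S, Homog (Pg i) (α i) rP) ∧
  (∀ i ∈ S, ∀ x y : Ed d, ∀ φ : Ed d → ℝ, IsTest φ →
    Pg i y φ = ∑ j ∈ S, Pg j x φ * Gg j i x y)

/-- The modelled-distribution bound with constant `C` on the compact `K`. -/
def MDB {ι : Type} (S : Finset ι) (Gg : ι → ι → Ed d → Ed d → ℝ) (α : ι → ℝ)
    (γ : ℝ) (f : Ed d → ι → ℝ) (K : Set (Ed d)) (C : ℝ) : Prop :=
  (∀ x ∈ K, ∀ i ∈ S, |f x i| ≤ C) ∧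
  (∀ x ∈ K, ∀ y ∈ K, ∀ i ∈ S,
    |(∑ j ∈ S, Gg i j x y * f y j) - f x i| ≤ C * (dist y x) ^ (γ - α i))

/-- `f` is a modelled distribution of order `γ` relative to the model data. -/
def IsMD {ι : Type} (S : Finset ι) (Gg : ι → ι → Ed d → Ed d → ℝ) (α : ι → ℝ)
    (γ : ℝ) (f : Ed d → ι → ℝ) : Prop :=
  (∀ i ∈ S, Measurable fun x : Ed d => f x i) ∧
  ∀ K : Set (Ed d), IsCompact K → ∃ C, MDB S Gg α γ f K C

/-- The germ `⟨f, Π⟩_x = Σ_i f^i(x) Π^i_x`. -/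
def germOf {ι : Type} (S : Finset ι) (Pg : ι → GermF d) (f : Ed d → ι → ℝ) : GermF d :=
  fun x φ => ∑ i ∈ S, f x i * Pg i x φ

section Aux
variable {d : ℕ}

/-- basis vector -/
def eb (i : Fin d) : Ed d := EuclideanSpace.single i (1:ℝ)

private lemma foldr_pd_congr (k l : MIdx d) (L : List (Fin d))
    (h : ∀ i ∈ L, k i = l i) (f : Ed d → ℝ) :
    L.foldr (fun i g => (pd i)^[k i] g) f = L.foldr (fun i g => (pd i)^[l i] g) f := by
  induction L with
  | nil => rfl
  | cons a L ih =>
      simp only [List.foldr_cons]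
      rw [ih (fun i hi => h i (List.mem_cons_of_mem _ hi)), h a (List.mem_cons_self)]

private lemma foldr_pd_zero (k : MIdx d) (L : List (Fin d)) (h : ∀ i ∈ L, k i = 0)
    (f : Ed d → ℝ) :
    L.foldr (fun i g => (pd i)^[k i] g) f = f := by
  induction L with
  | nil => rfl
  | cons a L ih =>
      simp only [List.foldr_cons]
      rw [h a (List.mem_cons_self), ih (fun i hi => h i (List.mem_cons_of_mem _ hi))]
      rfl

lemma mderiv_eq_self (k : MIdx d) (h : ∀ j, k j = 0) (f : Ed d → ℝ) : mderiv k f = f :=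
  foldr_pd_zero k _ (fun i _ => h i) f

private lemma mem_take_finRange {s : ℕ} {j : Fin d} (h : j ∈ (List.finRange d).take s) :
    (j:ℕ) < s := by
  obtain ⟨n, hn, he⟩ := List.mem_iff_getElem.1 h
  have hn' : n < s := by
    have := hn; simp only [List.length_take, List.length_finRange, lt_min_iff] at this
    exact this.1
  rw [List.getElem_take, List.getElem_finRange] at he
  subst he; simpa using hn'

private lemma mem_drop_finRange {s : ℕ} {j : Fin d} (h : j ∈ (List.finRange d).drop s) :
    s ≤ (j:ℕ) := by
  obtain ⟨n, hn, he⟩ := List.mem_iff_getElem.1 h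
  rw [List.getElem_drop, List.getElem_finRange] at he
  subst he; simp

private lemma mderiv_eq_dropFoldr (k : MIdx d) (i : ℕ)
    (h : ∀ j : Fin d, (j:ℕ) < i → k j = 0) (f : Ed d → ℝ) :
    mderiv k f = ((List.finRange d).drop i).foldr (fun j g => (pd j)^[k j] g) f := by
  conv_lhs => rw [mderiv, ← List.take_append_drop i (List.finRange d), List.foldr_append]
  exact foldr_pd_zero k _ (fun j hj => h j (mem_take_finRange hj)) _

lemma pd_mderiv_eq (l : MIdx d) (i : Fin d) (h : ∀ j : Fin d, j < i → l j = 0)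
    (f : Ed d → ℝ) :
    pd i (mderiv l f) = mderiv (Function.update l i (l i + 1)) f := by
  classical
  set k := Function.update l i (l i + 1) with hk
  have hagree : ∀ j : Fin d, j ≠ i → k j = l j := fun j hj => Function.update_of_ne hj _ _
  have hdrop : (List.finRange d).drop (i:ℕ) = i :: (List.finRange d).drop ((i:ℕ)+1) := by
    rw [List.drop_eq_getElem_cons (by simp [i.isLt])]
    congr 1
    rw [List.getElem_finRange]
    ext; simp
  have h1 : mderiv l f
      = (pd i)^[l i] (((List.finRange d).drop ((i:ℕ)+1)).foldr (fun j g => (pd j)^[l j] g) f) := by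
    rw [mderiv_eq_dropFoldr l i (fun j hj => h j hj), hdrop]
    simp only [List.foldr_cons]
  have h2 : mderiv k f
      = (pd i)^[l i + 1] (((List.finRange d).drop ((i:ℕ)+1)).foldr (fun j g => (pd j)^[l j] g) f) := by
    have hk0 : ∀ j : Fin d, (j:ℕ) < (i:ℕ) → k j = 0 := by
      intro j hj
      have hji : j ≠ i := by intro e; subst e; omega
      rw [hagree j hji]; exact h j hj
    rw [mderiv_eq_dropFoldr k i hk0, hdrop]
    simp only [List.foldr_cons]
    rw [foldr_pd_congr k l _ (fun j hj => hagree j (by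
      have := mem_drop_finRange hj
      intro e; subst e; omega))]
    congr 1
    simp [hk]
  rw [h1, h2, Function.iterate_succ_apply']

lemma mdeg_update_succ (k : MIdx d) (i : Fin d) :
    mdeg (Function.update k i (k i + 1)) = mdeg k + 1 := by
  classical
  unfold mdeg
  rw [Finset.sum_update_of_mem (Finset.mem_univ i)]
  rw [← Finset.add_sum_erase Finset.univ k (Finset.mem_univ i)]
  have : Finset.univ \ {i} = Finset.univ.erase i := by
    ext j; simp [Finset.mem_erase, and_comm]
  rw [this]; omega

lemma exists_min_coord {k : MIdx d} (hk : mdeg k ≠ 0) :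
    ∃ i : Fin d, k i ≠ 0 ∧ ∀ j, j < i → k j = 0 := by
  classical
  have hex : ∃ i, k i ≠ 0 := by
    by_contra h; push_neg at h
    exact hk (by simp [mdeg, h])
  obtain ⟨i0, hi0⟩ := hex
  set S := Finset.univ.filter (fun j => k j ≠ 0) with hS
  have hSne : S.Nonempty := ⟨i0, by simp [hS, hi0]⟩
  refine ⟨S.min' hSne, ?_, ?_⟩
  · have := S.min'_mem hSne; simpa [hS] using this
  · intro j hj
    by_contra hkj
    exact absurd (S.min'_le j (by simp [hS, hkj])) (not_le.2 hj)

lemma exists_peel {k : MIdx d} {N : ℕ} (hk : mdeg k = N + 1) :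
    ∃ (l : MIdx d) (i : Fin d), (∀ j, j < i → l j = 0) ∧ mdeg l = N ∧
      k = Function.update l i (l i + 1) := by
  classical
  obtain ⟨i, hki, hmin⟩ := exists_min_coord (k := k) (by omega)
  refine ⟨Function.update k i (k i - 1), i, ?_, ?_, ?_⟩
  · intro j hj
    rw [Function.update_of_ne (by intro e; subst e; omega)]
    exact hmin j hj
  · have := mdeg_update_succ (Function.update k i (k i - 1)) i
    rw [Function.update_idem, Function.update_self] at this
    have h2 : k i - 1 + 1 = k i := by omega
    rw [h2, Function.update_eq_self] at this
    omega
  · rw [Function.update_idem, Function.update_self]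
    have h2 : k i - 1 + 1 = k i := by omega
    rw [h2, Function.update_eq_self]

lemma pd_eqOn {U : Set (Ed d)} (hU : IsOpen U) {f g : Ed d → ℝ} (h : Set.EqOn f g U)
    (i : Fin d) : Set.EqOn (pd i f) (pd i g) U := by
  intro y hy
  exact Filter.EventuallyEq.lineDeriv_eq (Filter.eventuallyEq_of_mem (hU.mem_nhds hy) h)

private lemma iter_pd_eqOn {U : Set (Ed d)} (hU : IsOpen U) {f g : Ed d → ℝ}
    (h : Set.EqOn f g U) (i : Fin d) (n : ℕ) :
    Set.EqOn ((pd i)^[n] f) ((pd i)^[n] g) U := by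
  induction n generalizing f g with
  | zero => exact h
  | succ n ih =>
      rw [Function.iterate_succ_apply', Function.iterate_succ_apply']
      exact pd_eqOn hU (ih h) i

lemma mderiv_eqOn {U : Set (Ed d)} (hU : IsOpen U) {f g : Ed d → ℝ} (h : Set.EqOn f g U)
    (k : MIdx d) : Set.EqOn (mderiv k f) (mderiv k g) U := by
  unfold mderiv
  induction (List.finRange d) generalizing f g with
  | nil => exact h
  | cons a L ih =>
      simp only [List.foldr_cons]
      exact iter_pd_eqOn hU (ih h) a (k a)

lemma pd_zero_fun (i : Fin d) : pd i (fun _ : Ed d => (0:ℝ)) = fun _ => 0 := by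
  funext y
  simp [pd, lineDeriv]

lemma mderiv_zero_fun (k : MIdx d) : mderiv k (fun _ : Ed d => (0:ℝ)) = fun _ => 0 := by
  unfold mderiv
  induction (List.finRange d) with
  | nil => rfl
  | cons a L ih =>
      simp only [List.foldr_cons, ih]
      induction (k a) with
      | zero => rfl
      | succ n ih2 => rw [Function.iterate_succ_apply', ih2, pd_zero_fun]

lemma mderiv_eq_zero_of_eqOn_zero {U : Set (Ed d)} (hU : IsOpen U) {f : Ed d → ℝ}
    (h : ∀ z ∈ U, f z = 0) (k : MIdx d) {y : Ed d} (hy : y ∈ U) : mderiv k f y = 0 := by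
  have h2 := mderiv_eqOn hU (fun z hz => (h z hz : f z = (fun _ => (0:ℝ)) z)) k hy
  rw [h2, mderiv_zero_fun]

end Aux
section Clairaut
variable {d : ℕ}

lemma hasLineDerivAt_iff' {g : Ed d → ℝ} {A : ℝ} {z v : Ed d} :
    HasLineDerivAt ℝ g A z v ↔ HasDerivAt (fun t : ℝ => g (z + t • v)) A 0 :=
  Iff.rfl

lemma hasDerivAt_line_shift {g : Ed d → ℝ} {A : ℝ} {z v : Ed d} {t : ℝ}
    (hg : HasLineDerivAt ℝ g A (z + t • v) v) :
    HasDerivAt (fun s : ℝ => g (z + s • v)) A t := by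
  have h0 : HasDerivAt (fun s : ℝ => g (z + t • v + s • v)) A 0 := hg
  have h1 : HasDerivAt (fun s : ℝ => s - t) 1 t := by
    simpa using (hasDerivAt_id t).sub_const t
  have h2 : HasDerivAt ((fun s' : ℝ => g (z + t • v + s' • v)) ∘ (fun s : ℝ => s - t))
      (A * 1) t := HasDerivAt.comp t (by simpa using h0) h1
  have h3 : ((fun s' : ℝ => g (z + t • v + s' • v)) ∘ (fun s : ℝ => s - t))
      = fun s : ℝ => g (z + s • v) := by
    funext s
    simp only [Function.comp_apply]
    congr 1
    rw [sub_smul]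
    abel
  rw [h3] at h2
  simpa using h2

lemma lineDifferentiableAt.hasLineDerivAt_pd {u : Ed d → ℝ} {z : Ed d} {i : Fin d}
    (h : LineDifferentiableAt ℝ u z (eb i)) :
    HasLineDerivAt ℝ u (pd i u z) z (eb i) :=
  h.hasLineDerivAt

lemma norm_eb (i : Fin d) : ‖(eb i : Ed d)‖ = 1 := by
  simp [eb, EuclideanSpace.norm_single]

lemma clairaut {u : Ed d → ℝ} {a b : Fin d} {vab : Ed d → ℝ} (p : Ed d)
    (hb : ∀ z, LineDifferentiableAt ℝ u z (eb b))
    (ha : ∀ z, LineDifferentiableAt ℝ u z (eb a))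
    (hab : ∀ z, HasLineDerivAt ℝ (pd b u) (vab z) z (eb a))
    (hcont : Continuous vab) :
    HasLineDerivAt ℝ (pd a u) (vab p) p (eb b) := by
  rw [hasLineDerivAt_iff', hasDerivAt_iff_isLittleO, Asymptotics.isLittleO_iff]
  intro ε hε
  -- continuity choice
  obtain ⟨δ0, hδ0, hδball⟩ : ∃ δ0 > 0, ∀ z ∈ closedBall p δ0, |vab z - vab p| ≤ ε := by
    obtain ⟨δ0, hδ0, h⟩ := Metric.continuousAt_iff.1 hcont.continuousAt ε hε
    exact ⟨δ0/2, by positivity, fun z hz => le_of_lt (by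
      have := h (show dist z p < δ0 from lt_of_le_of_lt (mem_closedBall.1 hz) (by linarith))
      simpa [Real.dist_eq] using this)⟩
  set δ := δ0 / 2 with hδdef
  have hδ : 0 < δ := by positivity
  have hmem : ∀ s t : ℝ, |s| ≤ δ → |t| ≤ δ →
      p + s • eb a + t • eb b ∈ closedBall p δ0 := by
    intro s t hs ht
    rw [mem_closedBall, dist_eq_norm]
    have : p + s • eb a + t • eb b - p = s • eb a + t • eb b := by abel
    rw [this]
    calc ‖s • eb a + t • eb b‖ ≤ ‖s • (eb a : Ed d)‖ + ‖t • (eb b : Ed d)‖ := norm_add_le _ _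
    _ ≤ δ + δ := by
        rw [norm_smul, norm_smul, norm_eb, norm_eb]
        simp only [mul_one, Real.norm_eq_abs]
        exact add_le_add hs ht
    _ = δ0 := by rw [hδdef]; ring
  -- Step C1
  have C1 : ∀ s t : ℝ, |s| ≤ δ → |t| ≤ δ →
      |pd b u (p + t • eb b + s • eb a) - pd b u (p + t • eb b) - s * vab p| ≤ ε * |s| := by
    intro s t hs ht
    set z := p + t • eb b with hz
    have hφ : ∀ σ ∈ closedBall (0:ℝ) δ,
        HasDerivWithinAt (fun σ' : ℝ => pd b u (z + σ' • eb a) - σ' * vab p)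
          (vab (z + σ • eb a) - vab p) (closedBall (0:ℝ) δ) σ := by
      intro σ hσ
      have hlin : HasDerivAt (fun σ' : ℝ => σ' * vab p) (vab p) σ := by
        simpa using (hasDerivAt_id σ).mul_const (vab p)
      exact ((hasDerivAt_line_shift (hab (z + σ • eb a))).sub hlin).hasDerivWithinAt
    have hbound : ∀ σ ∈ closedBall (0:ℝ) δ, ‖vab (z + σ • eb a) - vab p‖ ≤ ε := by
      intro σ hσ
      have : z + σ • eb a ∈ closedBall p δ0 := by
        have h5 := hmem σ t (by simpa [Real.dist_eq] using (mem_closedBall.1 hσ)) ht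
        have he : z + σ • eb a = p + σ • eb a + t • eb b := by rw [hz]; abel
        rw [he]; exact h5
      simpa [Real.norm_eq_abs] using hδball _ this
    have := Convex.norm_image_sub_le_of_norm_hasDerivWithin_le hφ hbound
      (convex_closedBall _ _) (mem_closedBall_self (le_of_lt hδ))
      (show s ∈ closedBall (0:ℝ) δ by simpa [Real.dist_eq] using hs)
    have h9 : |(pd b u (z + s • eb a) - s * vab p) - pd b u z| ≤ ε * |s| := by
      simpa [Real.norm_eq_abs] using this
    have e2 : pd b u (z + s • eb a) - pd b u z - s * vab p
        = (pd b u (z + s • eb a) - s * vab p) - pd b u z := by ring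
    rw [e2]; exact h9
  -- Step C2
  have C2 : ∀ s t : ℝ, |s| ≤ δ → |t| ≤ δ →
      |(u (p + s • eb a + t • eb b) - u (p + t • eb b) - u (p + s • eb a) + u p)
        - s * t * vab p| ≤ (ε * |s|) * |t| := by
    intro s t hs ht
    have hw : ∀ τ ∈ closedBall (0:ℝ) δ,
        HasDerivWithinAt (fun τ' : ℝ => u (p + s • eb a + τ' • eb b) - u (p + τ' • eb b)
            - τ' * (s * vab p))
          (pd b u (p + s • eb a + τ • eb b) - pd b u (p + τ • eb b) - s * vab p)
          (closedBall (0:ℝ) δ) τ := by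
      intro τ hτ
      have h1 : HasDerivAt (fun τ' : ℝ => u ((p + s • eb a) + τ' • eb b))
          (pd b u (p + s • eb a + τ • eb b)) τ :=
        hasDerivAt_line_shift (hb _).hasLineDerivAt
      have h2 : HasDerivAt (fun τ' : ℝ => u (p + τ' • eb b)) (pd b u (p + τ • eb b)) τ :=
        hasDerivAt_line_shift (hb _).hasLineDerivAt
      have h3 : HasDerivAt (fun τ' : ℝ => τ' * (s * vab p)) (s * vab p) τ := by
        simpa using (hasDerivAt_id τ).mul_const (s * vab p)
      exact ((h1.sub h2).sub h3).hasDerivWithinAt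
    have hwbound : ∀ τ ∈ closedBall (0:ℝ) δ,
        ‖pd b u (p + s • eb a + τ • eb b) - pd b u (p + τ • eb b) - s * vab p‖ ≤ ε * |s| := by
      intro τ hτ
      have hτ' : |τ| ≤ δ := by simpa [Real.dist_eq] using (mem_closedBall.1 hτ)
      have := C1 s τ hs hτ'
      have he : p + τ • eb b + s • eb a = p + s • eb a + τ • eb b := by abel
      rw [he] at this
      simpa [Real.norm_eq_abs] using this
    have := Convex.norm_image_sub_le_of_norm_hasDerivWithin_le hw hwbound
      (convex_closedBall _ _) (mem_closedBall_self (le_of_lt hδ))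
      (show t ∈ closedBall (0:ℝ) δ by simpa [Real.dist_eq] using ht)
    have h9 : |(u (p + s • eb a + t • eb b) - u (p + t • eb b) - t * (s * vab p))
        - (u (p + s • eb a) - u p)| ≤ ε * |s| * |t| := by
      simpa [Real.norm_eq_abs] using this
    have e2 : (u (p + s • eb a + t • eb b) - u (p + t • eb b) - u (p + s • eb a) + u p)
        - s * t * vab p
        = (u (p + s • eb a + t • eb b) - u (p + t • eb b) - t * (s * vab p))
        - (u (p + s • eb a) - u p) := by ring
    rw [e2]
    calc _ ≤ ε * |s| * |t| := h9
    _ = (ε * |s|) * |t| := by ring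
  -- Step 4: conclude
  have key : ∀ t : ℝ, |t| ≤ δ →
      |pd a u (p + t • eb b) - pd a u p - t * vab p| ≤ ε * |t| := by
    intro t ht
    have h1 : HasDerivAt (fun s : ℝ => u ((p + t • eb b) + s • eb a))
        (pd a u (p + t • eb b)) 0 := by
      simpa [hasLineDerivAt_iff', pd, eb] using (ha (p + t • eb b)).hasLineDerivAt
    have h2 : HasDerivAt (fun s : ℝ => u (p + s • eb a)) (pd a u p) 0 := by
      simpa [hasLineDerivAt_iff', pd, eb] using (ha p).hasLineDerivAt
    have hs1 := hasDerivAt_iff_tendsto_slope.1 h1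
    have hs2 := hasDerivAt_iff_tendsto_slope.1 h2
    have hF : Filter.Tendsto
        (fun s : ℝ => ((u (p + s • eb a + t • eb b) - u (p + t • eb b)
          - u (p + s • eb a) + u p) - s * t * vab p) / s)
        (nhdsWithin (0:ℝ) {(0:ℝ)}ᶜ)
        (nhds (pd a u (p + t • eb b) - pd a u p - t * vab p)) := by
      have := (hs1.sub hs2).sub (tendsto_const_nhds (x := t * vab p))
      refine Filter.Tendsto.congr' ?_ this
      filter_upwards [self_mem_nhdsWithin] with s hs
      have hs0 : s ≠ 0 := hs
      have hv : p + t • eb b + s • eb a = p + s • eb a + t • eb b := by abel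
      simp only [slope_def_field, hv, zero_smul, add_zero, sub_zero]
      field_simp
      ring
    have hbnd : ∀ᶠ s in nhdsWithin (0:ℝ) {(0:ℝ)}ᶜ,
        |((u (p + s • eb a + t • eb b) - u (p + t • eb b)
          - u (p + s • eb a) + u p) - s * t * vab p) / s| ≤ ε * |t| := by
      have hmem' : {s : ℝ | |s| ≤ δ} ∈ nhdsWithin (0:ℝ) {(0:ℝ)}ᶜ := by
        apply nhdsWithin_le_nhds
        have h8 : Metric.closedBall (0:ℝ) δ ∈ nhds (0:ℝ) := Metric.closedBall_mem_nhds 0 hδ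
        have h7 : Metric.closedBall (0:ℝ) δ = {s : ℝ | |s| ≤ δ} := by
          ext s; simp [Real.dist_eq]
        rwa [h7] at h8
      filter_upwards [hmem', self_mem_nhdsWithin] with s hs hs0
      have hs0' : s ≠ 0 := hs0
      rw [abs_div]
      rw [div_le_iff₀ (abs_pos.2 hs0')]
      calc |(u (p + s • eb a + t • eb b) - u (p + t • eb b) - u (p + s • eb a) + u p)
          - s * t * vab p| ≤ (ε * |s|) * |t| := C2 s t hs ht
      _ = ε * |t| * |s| := by ring
    exact le_of_tendsto (hF.abs) hbnd
  rw [Metric.eventually_nhds_iff]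
  refine ⟨δ, hδ, fun {t} ht => ?_⟩
  have := key t (le_of_lt (by simpa [Real.dist_eq] using ht))
  simpa [Real.norm_eq_abs, smul_eq_mul, mul_comm] using this

end Clairaut
section Schwarz
variable {d : ℕ}

/-- add one to coordinate `i` -/
def madd (k : MIdx d) (i : Fin d) : MIdx d := Function.update k i (k i + 1)

lemma mdeg_madd (k : MIdx d) (i : Fin d) : mdeg (madd k i) = mdeg k + 1 :=
  mdeg_update_succ k i

lemma mdeg_eq_zero_iff {k : MIdx d} : mdeg k = 0 ↔ ∀ j, k j = 0 := by
  constructor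
  · intro h j
    exact (Finset.sum_eq_zero_iff.1 h) j (Finset.mem_univ j)
  · intro h; simp [mdeg, h]

lemma madd_comm (k : MIdx d) {i j : Fin d} (hij : i ≠ j) :
    madd (madd k i) j = madd (madd k j) i := by
  unfold madd
  rw [Function.update_of_ne hij.symm, Function.update_of_ne hij,
    Function.update_comm hij.symm]

lemma pd_mderiv_madd {r : ℕ} {h : Ed d → ℝ} (hcr : IsCr r h) :
    ∀ N k, mdeg k = N → mdeg k < r → ∀ j : Fin d,
      pd j (mderiv k h) = mderiv (madd k j) h := by
  intro N
  induction N with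
  | zero =>
      intro k hk _ j
      exact pd_mderiv_eq k j (fun j' _ => mdeg_eq_zero_iff.1 hk j') h
  | succ N ih =>
      intro k hk hkr j
      by_cases hvan : ∀ j' : Fin d, j' < j → k j' = 0
      · exact pd_mderiv_eq k j hvan h
      · push_neg at hvan
        obtain ⟨j', hj'j, hj'⟩ := hvan
        obtain ⟨κ, i, hκ0, hκdeg, hkdecomp⟩ := exists_peel hk
        have hkmadd : k = madd κ i := hkdecomp
        have hij : i < j := by
          by_contra hc
          push_neg at hc  -- j ≤ i
          have : j' < i := lt_of_lt_of_le hj'j hc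
          apply hj'
          rw [hkmadd, madd, Function.update_of_ne (by intro e; subst e; exact absurd this (lt_irrefl _))]
          exact hκ0 j' this
        have hijne : i ≠ j := Fin.ne_of_lt hij
        have hκr : mdeg κ < r := by omega
        have hpdi : pd i (mderiv κ h) = mderiv k h := by
          rw [pd_mderiv_eq κ i hκ0 h, ← hkdecomp]
        have hpdj : pd j (mderiv κ h) = mderiv (madd κ j) h := ih κ hκdeg (by omega) j
        have hκj0 : ∀ j'' : Fin d, j'' < i → (madd κ j) j'' = 0 := by
          intro j'' hj''
          rw [madd, Function.update_of_ne (by intro e; subst e; exact absurd (lt_trans hj'' hij) (lt_irrefl _))]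
          exact hκ0 j'' hj''
        have hpdij : pd i (mderiv (madd κ j) h) = mderiv (madd (madd κ j) i) h :=
          pd_mderiv_eq (madd κ j) i hκj0 h
        have hdegκj : mdeg (madd κ j) = N + 1 := by rw [mdeg_madd]; omega
        have htarget : madd (madd κ j) i = madd k j := by
          rw [hkmadd, madd_comm κ (Ne.symm hijne)]
        -- Clairaut
        have hcl : ∀ p, HasLineDerivAt ℝ (pd i (mderiv κ h)) (mderiv (madd k j) h p) p (eb j) := by
          intro p
          refine clairaut p ?_ ?_ ?_ ?_
          · intro z
            exact ((hcr κ (by omega)).2 hκr j z)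
          · intro z
            exact ((hcr κ (by omega)).2 hκr i z)
          · intro z
            have hld : LineDifferentiableAt ℝ (mderiv (madd κ j) h) z (eb i) :=
              (hcr (madd κ j) (by omega)).2 (by omega) i z
            have := hld.hasLineDerivAt
            have hval : lineDeriv ℝ (mderiv (madd κ j) h) z (eb i)
                = mderiv (madd k j) h z := by
              have : pd i (mderiv (madd κ j) h) z = mderiv (madd (madd κ j) i) h z := by
                rw [hpdij]
              rw [show lineDeriv ℝ (mderiv (madd κ j) h) z (eb i)
                  = pd i (mderiv (madd κ j) h) z from rfl, this, htarget]
            rw [hval] at this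
            rw [hpdj]
            exact this
          · have : Continuous (mderiv (madd k j) h) := by
              have := (hcr (madd k j) ?_).1
              · exact this
              · rw [mdeg_madd]; omega
            exact this
        funext p
        rw [← hpdi]
        exact (hcl p).lineDeriv

end Schwarz
section Smooth
variable {d : ℕ}

lemma pd_of_contDiff {g : Ed d → ℝ} (hg : ContDiff ℝ (⊤:ℕ∞) g) (i : Fin d) :
    pd i g = fun z => fderiv ℝ g z (eb i) := by
  funext z
  exact (hg.differentiable (by simp) z).lineDeriv_eq_fderiv

lemma contDiff_pd {g : Ed d → ℝ} (hg : ContDiff ℝ (⊤:ℕ∞) g) (i : Fin d) :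
    ContDiff ℝ (⊤:ℕ∞) (pd i g) := by
  rw [pd_of_contDiff hg i]
  exact (hg.fderiv_right (by exact_mod_cast le_top)).clm_apply contDiff_const

lemma contDiff_mderiv {g : Ed d → ℝ} (hg : ContDiff ℝ (⊤:ℕ∞) g) (k : MIdx d) :
    ContDiff ℝ (⊤:ℕ∞) (mderiv k g) := by
  unfold mderiv
  induction (List.finRange d) generalizing g with
  | nil => exact hg
  | cons a L ih =>
      simp only [List.foldr_cons]
      have h1 := ih hg
      induction (k a) with
      | zero => exact h1
      | succ n ih2 => rw [Function.iterate_succ_apply']; exact contDiff_pd ih2 a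

lemma isCr_of_contDiff {g : Ed d → ℝ} (hg : ContDiff ℝ (⊤:ℕ∞) g) (r : ℕ) : IsCr r g := by
  intro k _
  refine ⟨(contDiff_mderiv hg k).continuous, fun _ i x => ?_⟩
  have hd : DifferentiableAt ℝ (mderiv k g) x :=
    (contDiff_mderiv hg k).differentiable (by simp) x
  exact (hd.hasFDerivAt.hasLineDerivAt _).lineDifferentiableAt

/-- count multi-index of a word -/
def cnt {N : ℕ} (m : Fin N → Fin d) : MIdx d :=
  fun i => (Finset.univ.filter (fun s => m s = i)).card

lemma mdeg_cnt {N : ℕ} (m : Fin N → Fin d) : mdeg (cnt m) = N := by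
  classical
  unfold mdeg cnt
  rw [← Finset.card_eq_sum_card_fiberwise (fun x _ => Finset.mem_univ (m x))]
  simp

lemma cnt_cons {N : ℕ} (i : Fin d) (m : Fin N → Fin d) :
    cnt (Fin.cons i m) = madd (cnt m) i := by
  classical
  funext a
  unfold cnt madd
  rw [Function.update_apply]
  have h1 : ∀ (M : ℕ) (w : Fin M → Fin d),
      (Finset.univ.filter (fun s => w s = a)).card
        = ∑ s : Fin M, (if w s = a then 1 else 0) := by
    intro M w
    rw [Finset.card_filter]
  rw [h1, h1, Fin.sum_univ_succ]
  simp only [Fin.cons_zero, Fin.cons_succ]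
  by_cases ha : a = i
  · subst ha
    rw [if_pos rfl, if_pos rfl, Finset.card_filter]
    omega
  · rw [if_neg (fun e => ha e.symm), if_neg ha]
    omega

lemma mpow_madd (v : Ed d) (l : MIdx d) (i : Fin d) :
    mpow v (madd l i) = v i * mpow v l := by
  classical
  unfold mpow madd
  rw [← Finset.mul_prod_erase Finset.univ
      (fun j => v j ^ Function.update l i (l i + 1) j) (Finset.mem_univ i),
    ← Finset.mul_prod_erase Finset.univ (fun j => v j ^ l j) (Finset.mem_univ i)]
  rw [Finset.prod_congr rfl (fun j hj =>
    by rw [Function.update_of_ne (Finset.ne_of_mem_erase hj)] : ∀ _, _)]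
  rw [Function.update_self, pow_succ]
  ring

lemma mpow_cnt {N : ℕ} (v : Ed d) (m : Fin N → Fin d) :
    mpow v (cnt m) = ∏ s : Fin N, v (m s) := by
  classical
  unfold mpow cnt
  rw [← Finset.prod_fiberwise_of_maps_to (fun x _ => Finset.mem_univ (m x)) (fun s => v (m s))]
  refine Finset.prod_congr rfl (fun i _ => ?_)
  have hcg : ∀ s ∈ Finset.univ.filter (fun s => m s = i), v (m s) = v i := by
    intro s hs
    simp only [Finset.mem_filter] at hs
    rw [hs.2]
  rw [Finset.prod_congr rfl hcg, Finset.prod_const]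

lemma coord_abs_le_norm (v : Ed d) (i : Fin d) : |v i| ≤ ‖v‖ := by
  rw [EuclideanSpace.norm_eq]
  have h1 : |v i| = Real.sqrt (‖v i‖^2) := by
    rw [Real.sqrt_sq_eq_abs]; simp
  rw [h1]
  apply Real.sqrt_le_sqrt
  refine Finset.single_le_sum (f := fun j => ‖v j‖^2) (fun j _ => by positivity) (Finset.mem_univ i)

lemma abs_mpow_cnt_le {N : ℕ} (v : Ed d) (m : Fin N → Fin d) :
    |mpow v (cnt m)| ≤ ‖v‖ ^ N := by
  rw [mpow_cnt, Finset.abs_prod]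
  calc ∏ s : Fin N, |v (m s)| ≤ ∏ s : Fin N, ‖v‖ :=
        Finset.prod_le_prod (fun s _ => abs_nonneg _) (fun s _ => coord_abs_le_norm v (m s))
  _ = ‖v‖ ^ N := by rw [Finset.prod_const, Finset.card_fin]

lemma mpow_zero_midx (v : Ed d) (k : MIdx d) (hk : ∀ j, k j = 0) : mpow v k = 1 := by
  unfold mpow; simp [hk]

lemma mpow_neg_sub (x y : Ed d) (l : MIdx d) :
    mpow (x - y) l = (-1:ℝ) ^ (mdeg l) * mpow (y - x) l := by
  unfold mpow mdeg
  rw [← Finset.prod_pow_eq_pow_sum]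
  rw [← Finset.prod_mul_distrib]
  refine Finset.prod_congr rfl (fun i _ => ?_)
  have h : (x - y) i = -1 * (y - x) i := by
    have h1 : (x - y) i = x i - y i := rfl
    have h2 : (y - x) i = y i - x i := rfl
    rw [h1, h2]; ring
  rw [h, mul_pow]

end Smooth

section CrNorm
variable {d : ℕ}

lemma finite_midx (r : ℕ) : Finite {k : MIdx d // mdeg k ≤ r} := by
  refine Finite.of_injective (fun k => (fun i => (⟨min (k.1 i) r, by omega⟩ : Fin (r+1)))) ?_
  intro k l hkl
  have hk : ∀ i, k.1 i ≤ r := fun i =>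
    le_trans (Finset.single_le_sum (f := fun j => k.1 j) (fun j _ => Nat.zero_le _) (Finset.mem_univ i)) k.2
  have hl : ∀ i, l.1 i ≤ r := fun i =>
    le_trans (Finset.single_le_sum (f := fun j => l.1 j) (fun j _ => Nat.zero_le _) (Finset.mem_univ i)) l.2
  ext i
  have h9 := congrFun hkl i
  simp only [Fin.mk.injEq] at h9
  rw [min_eq_left (hk i), min_eq_left (hl i)] at h9
  exact h9

lemma crNorm_nonneg (r : ℕ) (φ : Ed d → ℝ) : 0 ≤ crNorm r φ := by
  apply Real.iSup_nonneg
  intro k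
  apply Real.iSup_nonneg
  intro x
  exact abs_nonneg _

lemma crNorm_le {r : ℕ} {φ : Ed d → ℝ} {B : ℝ} (hB : 0 ≤ B)
    (h : ∀ k : MIdx d, mdeg k ≤ r → ∀ x, |mderiv k φ x| ≤ B) : crNorm r φ ≤ B := by
  apply Real.iSup_le (fun k => ?_) hB
  exact Real.iSup_le (fun x => h k.1 k.2 x) hB

lemma abs_mderiv_le_crNorm {r : ℕ} {φ : Ed d → ℝ}
    (hbd : ∀ k : MIdx d, mdeg k ≤ r → ∃ B, ∀ x, |mderiv k φ x| ≤ B)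
    {k : MIdx d} (hk : mdeg k ≤ r) (x : Ed d) : |mderiv k φ x| ≤ crNorm r φ := by
  haveI := finite_midx (d := d) r
  have h1 : |mderiv k φ x| ≤ ⨆ x', |mderiv k φ x'| := by
    obtain ⟨B, hB⟩ := hbd k hk
    exact le_ciSup ⟨B, by rintro y ⟨x', rfl⟩; exact hB x'⟩ x
  refine le_trans h1 ?_
  have h2 : BddAbove (Set.range (fun k' : {k' : MIdx d // mdeg k' ≤ r} =>
      ⨆ x', |mderiv k'.1 φ x'|)) :=
    Set.Finite.bddAbove (Set.finite_range _)
  exact le_ciSup h2 ⟨k, hk⟩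

lemma support_mderiv_subset (k : MIdx d) (φ : Ed d → ℝ) :
    Function.support (mderiv k φ) ⊆ tsupport φ := by
  intro z hz
  by_contra hzn
  apply hz
  exact mderiv_eq_zero_of_eqOn_zero (isOpen_compl_iff.2 (isClosed_tsupport φ))
    (fun w hw => image_eq_zero_of_notMem_tsupport hw) k hzn

lemma hasCompactSupport_mderiv (k : MIdx d) {φ : Ed d → ℝ} (hφ : HasCompactSupport φ) :
    HasCompactSupport (mderiv k φ) :=
  HasCompactSupport.of_support_subset_isCompact hφ (support_mderiv_subset k φ)

lemma abs_mderiv_le_crNorm_of_test {r : ℕ} {φ : Ed d → ℝ} (hs : ContDiff ℝ (⊤:ℕ∞) φ)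
    (hc : HasCompactSupport φ) {k : MIdx d} (hk : mdeg k ≤ r) (x : Ed d) :
    |mderiv k φ x| ≤ crNorm r φ := by
  refine abs_mderiv_le_crNorm (fun k' _ => ?_) hk x
  obtain ⟨B, hB⟩ := (hasCompactSupport_mderiv k' hc).exists_bound_of_continuous
    (contDiff_mderiv hs k').continuous
  exact ⟨B, fun x' => by simpa using hB x'⟩

end CrNorm
section Param
variable {d : ℕ}

lemma slice_cont {H : Ed d → Ed d → ℝ} (hH : Continuous fun p : Ed d × Ed d => H p.1 p.2)
    (y : Ed d) : Continuous fun x => H x y :=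
  hH.comp (continuous_id.prodMk continuous_const)

lemma slice_cont' {H : Ed d → Ed d → ℝ} (hH : Continuous fun p : Ed d × Ed d => H p.1 p.2)
    (x : Ed d) : Continuous fun y => H x y :=
  hH.comp (continuous_const.prodMk continuous_id)

lemma integrable_slice {ψ : Ed d → ℝ} (hψ : Continuous ψ) (hcs : HasCompactSupport ψ)
    {H : Ed d → Ed d → ℝ} (hH : Continuous fun p : Ed d × Ed d => H p.1 p.2) (y : Ed d) :
    Integrable (fun x => ψ x * H x y) := by
  refine Continuous.integrable_of_hasCompactSupport ?_ (hcs.mul_right)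
  exact hψ.mul (slice_cont hH y)

lemma cont_param {ψ : Ed d → ℝ} (hψ : Continuous ψ) (hcs : HasCompactSupport ψ)
    {H : Ed d → Ed d → ℝ} (hH : Continuous fun p : Ed d × Ed d => H p.1 p.2) :
    Continuous fun y => ∫ x, ψ x * H x y := by
  rw [continuous_iff_continuousAt]
  intro y₀
  have hcomp : IsCompact ((tsupport ψ) ×ˢ closedBall y₀ 1) :=
    hcs.isCompact.prod (isCompact_closedBall y₀ 1)
  obtain ⟨M, hM⟩ := hcomp.exists_bound_of_continuousOn hH.continuousOn
  refine continuousAt_of_dominated (bound := fun x => ‖ψ x‖ * M) ?_ ?_ ?_ ?_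
  · filter_upwards with y
    exact (hψ.mul (slice_cont hH y)).aestronglyMeasurable
  · filter_upwards [Metric.ball_mem_nhds y₀ (by norm_num : (0:ℝ) < 1)] with y hy
    filter_upwards with x
    by_cases hx : x ∈ tsupport ψ
    · have hb : ‖H (x, y).1 (x, y).2‖ ≤ M :=
        hM (x, y) (Set.mk_mem_prod hx (Metric.ball_subset_closedBall hy))
      rw [norm_mul]
      exact mul_le_mul_of_nonneg_left hb (norm_nonneg _)
    · rw [image_eq_zero_of_notMem_tsupport hx]
      simp
  · exact Continuous.integrable_of_hasCompactSupport (hψ.norm.mul continuous_const)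
      ((hcs.norm).mul_right)
  · filter_upwards with x
    exact ((slice_cont' hH x).continuousAt).const_mul _

lemma lineDeriv_param {ψ : Ed d → ℝ} (hψ : Continuous ψ) (hcs : HasCompactSupport ψ)
    {H H' : Ed d → Ed d → ℝ} (hH : Continuous fun p : Ed d × Ed d => H p.1 p.2)
    (hH' : Continuous fun p : Ed d × Ed d => H' p.1 p.2) {v : Ed d}
    (hd : ∀ x z, HasLineDerivAt ℝ (H x) (H' x z) z v) (z : Ed d) :
    HasLineDerivAt ℝ (fun y => ∫ x, ψ x * H x y) (∫ x, ψ x * H' x z) z v := by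
  have hcomp : IsCompact ((tsupport ψ) ×ˢ closedBall z (1 + ‖v‖)) :=
    hcs.isCompact.prod (isCompact_closedBall z (1 + ‖v‖))
  obtain ⟨M, hM⟩ := hcomp.exists_bound_of_continuousOn hH'.continuousOn
  have hmem : ∀ t : ℝ, t ∈ Metric.ball (0:ℝ) 1 → z + t • v ∈ closedBall z (1 + ‖v‖) := by
    intro t ht
    rw [mem_closedBall, dist_eq_norm]
    have h1 : z + t • v - z = t • v := by abel
    rw [h1, norm_smul]
    have ht' : ‖t‖ ≤ 1 := le_of_lt (by simpa [Real.dist_eq] using ht)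
    calc ‖t‖ * ‖v‖ ≤ 1 * ‖v‖ := mul_le_mul_of_nonneg_right ht' (norm_nonneg _)
    _ ≤ 1 + ‖v‖ := by linarith [norm_nonneg v]
  have key := hasDerivAt_integral_of_dominated_loc_of_deriv_le
    (F := fun (t : ℝ) x => ψ x * H x (z + t • v))
    (F' := fun (t : ℝ) x => ψ x * H' x (z + t • v))
    (x₀ := (0:ℝ)) (bound := fun x => ‖ψ x‖ * M) (s := Metric.ball (0:ℝ) 1) (Metric.ball_mem_nhds _ one_pos)
    (by
      filter_upwards with t
      exact (hψ.mul (slice_cont hH _)).aestronglyMeasurable)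
    (integrable_slice hψ hcs hH _)
    ((hψ.mul (slice_cont hH' _)).aestronglyMeasurable)
    (by
      filter_upwards with x
      intro t ht
      by_cases hx : x ∈ tsupport ψ
      · have hb : ‖H' (x, z + t • v).1 (x, z + t • v).2‖ ≤ M :=
          hM _ (Set.mk_mem_prod hx (hmem t ht))
        rw [norm_mul]
        exact mul_le_mul_of_nonneg_left hb (norm_nonneg _)
      · rw [image_eq_zero_of_notMem_tsupport hx]
        simp)
    (Continuous.integrable_of_hasCompactSupport (hψ.norm.mul continuous_const)
      ((hcs.norm).mul_right))
    (by
      filter_upwards with x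
      intro t ht
      exact (hasDerivAt_line_shift (hd x (z + t • v))).const_mul (ψ x))
  have h2 : HasDerivAt (fun t : ℝ => ∫ x, ψ x * H x (z + t • v))
      (∫ x, ψ x * H' x (z + (0:ℝ) • v)) 0 := key.2
  have hz : z + (0:ℝ) • v = z := by simp
  rw [hz] at h2
  exact h2

end Param

section KstarReg
variable {d : ℕ}

lemma mixDeriv_eq_mderiv {Kf : Ed d → Ed d → ℝ} {k l : MIdx d} (hk : ∀ j, k j = 0)
    (x y : Ed d) : mixDeriv k l Kf x y = mderiv l (Kf x) y := by
  unfold mixDeriv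
  rw [mderiv_eq_self k hk]

lemma isCmr_joint_cont {r : ℕ} {Kf : Ed d → Ed d → ℝ} (hKf : IsCmr 0 r Kf)
    {l : MIdx d} (hl : mdeg l ≤ r) :
    Continuous fun p : Ed d × Ed d => mderiv l (Kf p.1) p.2 := by
  have h := (hKf (fun _ => 0) l (by simp [mdeg]) hl).1
  have he : (fun p : Ed d × Ed d => mixDeriv (fun _ => 0) l Kf p.1 p.2)
      = fun p : Ed d × Ed d => mderiv l (Kf p.1) p.2 := by
    funext p
    exact mixDeriv_eq_mderiv (fun _ => rfl) p.1 p.2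
  rwa [he] at h

lemma isCmr_isCr_slice {r : ℕ} {Kf : Ed d → Ed d → ℝ} (hKf : IsCmr 0 r Kf) (x : Ed d) :
    IsCr r (Kf x) := by
  intro l hl
  constructor
  · exact slice_cont' (H := fun x' y' => mderiv l (Kf x') y') (isCmr_joint_cont hKf hl) x
  · intro hlr j y
    exact (hKf (fun _ => 0) l (by simp [mdeg]) hl).2.2 hlr j x y

lemma kernel_schwarz {r : ℕ} {Kf : Ed d → Ed d → ℝ} (hKf : IsCmr 0 r Kf) (x : Ed d)
    {l : MIdx d} (hl : mdeg l < r) (j : Fin d) :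
    pd j (mderiv l (Kf x)) = mderiv (madd l j) (Kf x) :=
  pd_mderiv_madd (isCmr_isCr_slice hKf x) (mdeg l) l rfl hl j

lemma kstar_mderiv_repr {r : ℕ} {Kf : Ed d → Ed d → ℝ} (hKf : IsCmr 0 r Kf)
    {ψ : Ed d → ℝ} (hψ : Continuous ψ) (hcs : HasCompactSupport ψ) :
    ∀ k : MIdx d, mdeg k ≤ r →
      (mderiv k (kstar Kf ψ) = fun y => ∫ x, ψ x * mderiv k (Kf x) y) ∧
      (mdeg k < r → ∀ (j : Fin d) (z : Ed d),
        HasLineDerivAt ℝ (mderiv k (kstar Kf ψ))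
          (∫ x, ψ x * mderiv (madd k j) (Kf x) z) z (eb j)) := by
  have clause3 : ∀ k : MIdx d, mdeg k < r →
      (mderiv k (kstar Kf ψ) = fun y => ∫ x, ψ x * mderiv k (Kf x) y) →
      ∀ (j : Fin d) (z : Ed d),
        HasLineDerivAt ℝ (mderiv k (kstar Kf ψ))
          (∫ x, ψ x * mderiv (madd k j) (Kf x) z) z (eb j) := by
    intro k hk hrepr j z
    rw [hrepr]
    refine lineDeriv_param hψ hcs (isCmr_joint_cont hKf (le_of_lt hk))
      (isCmr_joint_cont hKf (by rw [mdeg_madd]; omega)) ?_ z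
    intro x z'
    have hld : LineDifferentiableAt ℝ (mderiv k (Kf x)) z' (eb j) :=
      (isCmr_isCr_slice hKf x k (le_of_lt hk)).2 hk j z'
    have h1 := hld.hasLineDerivAt
    have h2 : lineDeriv ℝ (mderiv k (Kf x)) z' (eb j) = mderiv (madd k j) (Kf x) z' := by
      have := kernel_schwarz hKf x hk j
      exact (congrFun this z' : pd j (mderiv k (Kf x)) z' = _)
    rwa [h2] at h1
  suffices hsuff : ∀ (N : ℕ) (k : MIdx d), mdeg k = N → mdeg k ≤ r →
      (mderiv k (kstar Kf ψ) = fun y => ∫ x, ψ x * mderiv k (Kf x) y) by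
    intro k hk
    have h1 := hsuff (mdeg k) k rfl hk
    exact ⟨h1, fun hlt => clause3 k hlt h1⟩
  intro N
  induction N with
  | zero =>
      intro k hk _
      have h0 : ∀ j, k j = 0 := mdeg_eq_zero_iff.1 hk
      rw [mderiv_eq_self k h0]
      funext y
      unfold kstar
      refine congrArg _ (funext fun x => ?_)
      rw [mderiv_eq_self k h0]
  | succ N ih =>
      intro k hk hkr
      obtain ⟨κ, i, hκ0, hκdeg, hkdec⟩ := exists_peel hk
      have hκr : mdeg κ < r := by omega
      have hrepr := ih κ hκdeg (le_of_lt hκr)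
      have hmadd : madd κ i = k := hkdec.symm
      have hpeel : mderiv k (kstar Kf ψ) = pd i (mderiv κ (kstar Kf ψ)) := by
        rw [pd_mderiv_eq κ i hκ0, ← hkdec]
      funext z
      rw [hpeel]
      have hld := clause3 κ hκr hrepr i z
      have := hld.lineDeriv
      rw [show pd i (mderiv κ (kstar Kf ψ)) z
          = lineDeriv ℝ (mderiv κ (kstar Kf ψ)) z (eb i) from rfl, this, hmadd]

lemma kstar_isCr {r : ℕ} {Kf : Ed d → Ed d → ℝ} (hKf : IsCmr 0 r Kf)
    {ψ : Ed d → ℝ} (hψ : Continuous ψ) (hcs : HasCompactSupport ψ) :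
    IsCr r (kstar Kf ψ) := by
  intro k hk
  obtain ⟨hrepr, hline⟩ := kstar_mderiv_repr hKf hψ hcs k hk
  constructor
  · rw [hrepr]
    exact cont_param hψ hcs (isCmr_joint_cont hKf hk)
  · intro hlt j z
    exact (hline hlt j z).lineDifferentiableAt

end KstarReg
section Taylor
variable {d : ℕ}

lemma taylor1d (N : ℕ) (w : ℕ → ℝ → ℝ)
    (hw : ∀ j, j < N → ∀ t, HasDerivAt (w j) (w (j+1) t) t)
    {M : ℝ} (hM : ∀ t ∈ Set.Icc (0:ℝ) 1, |w N t| ≤ M) :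
    |w 0 1 - ∑ j ∈ Finset.range N, ((j.factorial : ℝ))⁻¹ * w j 0| ≤ M := by
  rcases Nat.eq_zero_or_pos N with hN | hN
  · subst hN
    simpa using hM 1 (by norm_num)
  set B : ℕ → ℝ → ℝ :=
    fun j t => ((j.factorial : ℝ))⁻¹ * w j t * ((j:ℝ) * (1-t)^(j-1)) with hB
  set R : ℝ → ℝ :=
    fun t => ∑ j ∈ Finset.range N, ((j.factorial : ℝ))⁻¹ * w j t * (1-t)^j with hR
  have hAB : ∀ (j : ℕ) (t : ℝ),
      ((j.factorial : ℝ))⁻¹ * w (j+1) t * (1-t)^j = B (j+1) t := by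
    intro j t
    simp only [hB]
    have h1 : (((j+1).factorial : ℝ)) = ((j:ℝ)+1) * (j.factorial : ℝ) := by
      rw [Nat.factorial_succ]; push_cast; ring
    have h2 : ((j+1) - 1 : ℕ) = j := rfl
    rw [h2, h1]
    have h3 : (j.factorial : ℝ) ≠ 0 := Nat.cast_ne_zero.2 (Nat.factorial_ne_zero j)
    have h4 : ((j:ℝ)+1) ≠ 0 := by positivity
    field_simp
    push_cast
    ring
  have hRderiv : ∀ t : ℝ, HasDerivAt R (B N t) t := by
    intro t
    have hterm : ∀ j ∈ Finset.range N,
        HasDerivAt (fun t => ((j.factorial : ℝ))⁻¹ * w j t * (1-t)^j)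
          (B (j+1) t - B j t) t := by
      intro j hj
      rw [Finset.mem_range] at hj
      have h1 : HasDerivAt (fun t : ℝ => (1-t)^j)
          (-((j:ℝ) * (1-t)^(j-1))) t := by
        have h2 : HasDerivAt (fun t : ℝ => 1 - t) (-1) t := by
          simpa using (hasDerivAt_id t).const_sub (1:ℝ)
        have h3 : HasDerivAt (fun t : ℝ => (1-t)^j) _ t := (hasDerivAt_pow j (1-t)).comp t h2
        convert h3 using 1
        ring
      have h4 : HasDerivAt (fun t => ((j.factorial : ℝ))⁻¹ * w j t)
          (((j.factorial : ℝ))⁻¹ * w (j+1) t) t := (hw j hj t).const_mul _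
      have h5 : HasDerivAt (fun t => ((j.factorial : ℝ))⁻¹ * w j t * (1-t)^j) _ t := h4.mul h1
      convert h5 using 1
      rw [← hAB j t]
      simp only [hB]
      ring
    have h6 := HasDerivAt.fun_sum hterm
    have h7 : ∑ j ∈ Finset.range N, (B (j+1) t - B j t) = B N t - B 0 t :=
      Finset.sum_range_sub (fun j => B j t) N
    have h8 : B 0 t = 0 := by simp [hB]
    rw [h7, h8, sub_zero] at h6
    exact h6
  have hM0 : 0 ≤ M := le_trans (abs_nonneg _) (hM 0 (by norm_num))
  have hBbound : ∀ t ∈ Set.Icc (0:ℝ) 1, ‖B N t‖ ≤ M := by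
    intro t ht
    obtain ⟨ht0, ht1⟩ := ht
    simp only [hB, Real.norm_eq_abs]
    have h1 : |((N.factorial : ℝ))⁻¹ * w N t * ((N:ℝ) * (1-t)^(N-1))|
        = (((N.factorial : ℝ))⁻¹ * ((N:ℝ) * (1-t)^(N-1))) * |w N t| := by
      rw [abs_mul, abs_mul, abs_mul]
      have e1 : |((N.factorial : ℝ))⁻¹| = ((N.factorial : ℝ))⁻¹ := abs_of_nonneg (by positivity)
      have e2 : |(N:ℝ)| = (N:ℝ) := abs_of_nonneg (by positivity)
      have e3 : |(1-t)^(N-1)| = (1-t)^(N-1) := abs_of_nonneg (pow_nonneg (by linarith) _)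
      rw [e1, e2, e3]
      ring
    rw [h1]
    have h2 : ((N.factorial : ℝ))⁻¹ * ((N:ℝ) * (1-t)^(N-1)) ≤ 1 := by
      have h3 : (1-t)^(N-1) ≤ 1 := pow_le_one₀ (by linarith) (by linarith)
      have h4 : (N:ℝ) ≤ (N.factorial : ℝ) := by
        exact_mod_cast Nat.self_le_factorial N
      have h5 : (0:ℝ) < (N.factorial : ℝ) := by
        exact_mod_cast Nat.factorial_pos N
      calc ((N.factorial : ℝ))⁻¹ * ((N:ℝ) * (1-t)^(N-1))
          ≤ ((N.factorial : ℝ))⁻¹ * ((N.factorial : ℝ) * 1) := by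
            apply mul_le_mul_of_nonneg_left ?_ (by positivity)
            apply mul_le_mul h4 h3 (pow_nonneg (by linarith) _) (by positivity)
      _ = 1 := by field_simp
    calc (((N.factorial : ℝ))⁻¹ * ((N:ℝ) * (1-t)^(N-1))) * |w N t|
        ≤ 1 * M := by
          apply mul_le_mul h2 (hM t ⟨ht0, ht1⟩) (abs_nonneg _) (by norm_num)
    _ = M := one_mul M
  have hfinal := Convex.norm_image_sub_le_of_norm_hasDerivWithin_le
    (f := R) (f' := fun t => B N t) (s := Set.Icc (0:ℝ) 1)
    (fun t ht => (hRderiv t).hasDerivWithinAt) hBbound (convex_Icc 0 1)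
    (Set.left_mem_Icc.2 (by norm_num)) (Set.right_mem_Icc.2 (by norm_num))
  have hR1 : R 1 = w 0 1 := by
    simp only [hR]
    rw [Finset.sum_eq_single 0]
    · simp
    · intro j hj hj0
      have : (1 - (1:ℝ))^j = 0 := by
        rw [sub_self]
        exact zero_pow hj0
      rw [this, mul_zero]
    · intro h
      exact absurd (Finset.mem_range.2 hN) h
  have hR0 : R 0 = ∑ j ∈ Finset.range N, ((j.factorial : ℝ))⁻¹ * w j 0 := by
    simp only [hR]
    refine Finset.sum_congr rfl (fun j _ => ?_)
    simp
  rw [hR1, hR0] at hfinal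
  simpa [Real.norm_eq_abs] using hfinal

end Taylor
section TaylorMulti
variable {d : ℕ}

lemma euclid_decomp (v : Ed d) : v = ∑ i : Fin d, v i • eb i := by
  classical
  have h := (EuclideanSpace.basisFun (Fin d) ℝ).sum_repr v
  conv_lhs => rw [← h]
  refine Finset.sum_congr rfl (fun i _ => ?_)
  rw [EuclideanSpace.basisFun_repr, EuclideanSpace.basisFun_apply]
  rfl

lemma hasDerivAt_mderiv_line {ψ : Ed d → ℝ} (hψ : ContDiff ℝ (⊤:ℕ∞) ψ)
    (l : MIdx d) (y v : Ed d) (t : ℝ) :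
    HasDerivAt (fun t : ℝ => mderiv l ψ (y + t • v))
      (∑ i : Fin d, v i * mderiv (madd l i) ψ (y + t • v)) t := by
  set z := y + t • v with hz
  have hline : HasDerivAt (fun t : ℝ => y + t • v) v t := by
    simpa using ((hasDerivAt_id t).smul_const v).const_add y
  have hg : ContDiff ℝ (⊤:ℕ∞) (mderiv l ψ) := contDiff_mderiv hψ l
  have hF : HasFDerivAt (mderiv l ψ) (fderiv ℝ (mderiv l ψ) z) z :=
    (hg.differentiable (by simp) z).hasFDerivAt
  have hcomp := hF.comp_hasDerivAt t hline
  have hval : fderiv ℝ (mderiv l ψ) z v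
      = ∑ i : Fin d, v i * mderiv (madd l i) ψ z := by
    conv_lhs => rw [euclid_decomp v]
    rw [map_sum]
    refine Finset.sum_congr rfl (fun i _ => ?_)
    rw [ContinuousLinearMap.map_smul]
    have h1 : fderiv ℝ (mderiv l ψ) z (eb i) = pd i (mderiv l ψ) z :=
      ((hg.differentiable (by simp) z).lineDeriv_eq_fderiv).symm
    have h2 : pd i (mderiv l ψ) z = mderiv (madd l i) ψ z := by
      rw [pd_mderiv_madd (isCr_of_contDiff hψ (mdeg l + 1)) (mdeg l) l rfl (by omega) i]
    rw [h1, h2]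
    simp
  rw [hval] at hcomp
  exact hcomp

lemma taylor_multi {r : ℕ} {ψ : Ed d → ℝ} (hψ : ContDiff ℝ (⊤:ℕ∞) ψ)
    (hcs : HasCompactSupport ψ) (y v : Ed d) :
    |ψ (y + v) - ∑ j ∈ Finset.range r, ((j.factorial : ℝ))⁻¹ *
        (∑ m : Fin j → Fin d, mpow v (cnt m) * mderiv (cnt m) ψ y)|
      ≤ ((d:ℝ)^r * ‖v‖^r) * crNorm r ψ := by
  classical
  set w : ℕ → ℝ → ℝ :=
    fun j t => ∑ m : Fin j → Fin d, mpow v (cnt m) * mderiv (cnt m) ψ (y + t • v) with hw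
  have hderiv : ∀ j, j < r → ∀ t, HasDerivAt (w j) (w (j+1) t) t := by
    intro j _ t
    have hterm : ∀ m ∈ (Finset.univ : Finset (Fin j → Fin d)),
        HasDerivAt (fun t : ℝ => mpow v (cnt m) * mderiv (cnt m) ψ (y + t • v))
          (mpow v (cnt m) * ∑ i : Fin d, v i * mderiv (madd (cnt m) i) ψ (y + t • v)) t :=
      fun m _ => (hasDerivAt_mderiv_line hψ (cnt m) y v t).const_mul _
    have hsum := HasDerivAt.fun_sum hterm
    have heq : ∑ m : Fin j → Fin d,
        (mpow v (cnt m) * ∑ i : Fin d, v i * mderiv (madd (cnt m) i) ψ (y + t • v))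
        = w (j+1) t := by
      simp only [hw]
      rw [← Fintype.sum_equiv (Fin.consEquiv (fun _ : Fin (j+1) => Fin d))
        (fun p : Fin d × (Fin j → Fin d) =>
          mpow v (cnt (Fin.cons p.1 p.2)) * mderiv (cnt (Fin.cons p.1 p.2)) ψ (y + t • v))
        (fun m : Fin (j+1) → Fin d => mpow v (cnt m) * mderiv (cnt m) ψ (y + t • v))
        (fun p => rfl)]
      rw [Fintype.sum_prod_type]
      rw [Finset.sum_comm]
      refine Finset.sum_congr rfl (fun m _ => ?_)
      rw [Finset.mul_sum]
      refine Finset.sum_congr rfl (fun i _ => ?_)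
      rw [cnt_cons, mpow_madd]
      ring
    rw [← heq]
    exact hsum
  have hM : ∀ t ∈ Set.Icc (0:ℝ) 1, |w r t| ≤ ((d:ℝ)^r * ‖v‖^r) * crNorm r ψ := by
    intro t _
    simp only [hw]
    calc |∑ m : Fin r → Fin d, mpow v (cnt m) * mderiv (cnt m) ψ (y + t • v)|
        ≤ ∑ m : Fin r → Fin d, |mpow v (cnt m) * mderiv (cnt m) ψ (y + t • v)| :=
          Finset.abs_sum_le_sum_abs _ _
    _ ≤ ∑ m : Fin r → Fin d, ‖v‖^r * crNorm r ψ := by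
        refine Finset.sum_le_sum (fun m _ => ?_)
        rw [abs_mul]
        refine mul_le_mul (abs_mpow_cnt_le v m)
          (abs_mderiv_le_crNorm_of_test hψ hcs (le_of_eq (mdeg_cnt m)) _)
          (abs_nonneg _) (by positivity)
    _ = ((d:ℝ)^r * ‖v‖^r) * crNorm r ψ := by
        rw [Finset.sum_const]
        have hcard : (Finset.univ : Finset (Fin r → Fin d)).card = d ^ r := by
          simp [Fintype.card_fun]
        rw [hcard]
        push_cast
        ring
  have hmain := taylor1d r w hderiv hM
  have hw01 : w 0 1 = ψ (y + v) := by
    simp only [hw]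
    rw [Fintype.sum_unique]
    have h0 : ∀ j, cnt (default : Fin 0 → Fin d) j = 0 := by
      intro j
      unfold cnt
      simp
    rw [mpow_zero_midx v _ h0, mderiv_eq_self _ h0]
    simp
  have hwj0 : ∀ j, w j 0 = ∑ m : Fin j → Fin d, mpow v (cnt m) * mderiv (cnt m) ψ y := by
    intro j
    simp only [hw]
    refine Finset.sum_congr rfl (fun m _ => ?_)
    simp
  rw [hw01] at hmain
  simp only [hwj0] at hmain
  exact hmain

end TaylorMulti
section Support
variable {d : ℕ}

lemma mderiv_slice_vanish {Kf : Ed d → Ed d → ℝ} {ρ' : ℝ}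
    (hsupp : ∀ x y, Kf x y ≠ 0 → dist x y ≤ ρ') {x y : Ed d} (h : ρ' < dist x y)
    (k : MIdx d) : mderiv k (Kf x) y = 0 := by
  refine mderiv_eq_zero_of_eqOn_zero (U := Metric.ball y (dist x y - ρ')) isOpen_ball
    ?_ k (mem_ball_self (by linarith))
  intro z hz
  by_contra h0
  have h1 := hsupp x z h0
  have h2 : dist z y < dist x y - ρ' := by simpa [mem_ball] using hz
  have h3 : dist x y ≤ dist x z + dist z y := dist_triangle x z y
  linarith

lemma mem_cthick_trans {K : Set (Ed d)} {y x : Ed d} {a b : ℝ} (ha : 0 ≤ a) (hb : 0 ≤ b)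
    (hy : y ∈ Metric.cthickening a K) (hxy : dist x y ≤ b) :
    x ∈ Metric.cthickening (a + b) K := by
  rw [Metric.mem_cthickening_iff] at hy ⊢
  calc EMetric.infEdist x K ≤ EMetric.infEdist y K + edist x y :=
        EMetric.infEdist_le_infEdist_add_edist
  _ ≤ ENNReal.ofReal a + ENNReal.ofReal b := by
      refine add_le_add hy ?_
      rw [edist_dist]
      exact ENNReal.ofReal_le_ofReal hxy
  _ = ENNReal.ofReal (a + b) := (ENNReal.ofReal_add ha hb).symm

lemma cont_mpow (y : Ed d) (l : MIdx d) : Continuous fun x : Ed d => mpow (x - y) l := by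
  unfold mpow
  refine continuous_finset_prod _ (fun i _ => ?_)
  have h1 : Continuous fun x : Ed d => (x - y) i := by
    have : (fun x : Ed d => (x - y) i) = fun x => (EuclideanSpace.proj i) x - y i := rfl
    rw [this]
    exact ((EuclideanSpace.proj i).continuous).sub continuous_const
  exact h1.pow _

end Support

section CoreEstimate
variable {d : ℕ}

lemma two_rpow_neg_le_one {a : ℝ} (ha : 0 ≤ a) : (2:ℝ) ^ (-a) ≤ 1 :=
  Real.rpow_le_one_of_one_le_of_nonpos one_le_two (by linarith)

lemma core_estimate {β ρ : ℝ} (hβ : 0 < β) (hρ : 0 < ρ) {Kn : ℕ → Ed d → Ed d → ℝ}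
    {r : ℕ} (hK : RegKer d β 0 r ρ Kn) {K : Set (Ed d)} (hKc : IsCompact K) :
    ∃ C : ℝ, 0 ≤ C ∧ ∀ ψ : Ed d → ℝ, ContDiff ℝ (⊤:ℕ∞) ψ → HasCompactSupport ψ →
      tsupport ψ ⊆ K → ∀ (n : ℕ) (k : MIdx d), mdeg k ≤ r → ∀ y : Ed d,
        |∫ x, ψ x * mderiv k (Kn n x) y|
          ≤ C * 2 ^ (-(β * (n:ℝ))) * crNorm r ψ := by
  classical
  obtain ⟨hreg, hsupp, hbnd⟩ := hK
  set K2 := Metric.cthickening (2*ρ) K with hK2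
  obtain ⟨c, hc0, hpt, hmom⟩ := hbnd K2 (hKc.cthickening)
  set Vd := (volume (Metric.ball (0:Ed d) 1)).toReal with hVd
  have hVd0 : 0 ≤ Vd := ENNReal.toReal_nonneg
  set A := (∑ j ∈ Finset.range r, (d:ℝ)^j) * c with hA
  set B := c * Vd * (d:ℝ)^r * ρ^(r+d) with hB
  have hA0 : 0 ≤ A := mul_nonneg (Finset.sum_nonneg (fun j _ => by positivity)) (le_of_lt hc0)
  have hB0 : 0 ≤ B := by positivity
  refine ⟨A + B, by linarith, ?_⟩
  intro ψ hψs hψc hψsupp n k hk y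
  have hcrn : 0 ≤ crNorm r ψ := crNorm_nonneg r ψ
  have hrpow0 : (0:ℝ) < 2 ^ (-(β * (n:ℝ))) := Real.rpow_pos_of_pos two_pos _
  set ρn := ρ * 2 ^ (-(n:ℝ)) with hρn
  have hρn0 : 0 < ρn := mul_pos hρ (Real.rpow_pos_of_pos two_pos _)
  have hρnρ : ρn ≤ ρ := by
    rw [hρn]
    nlinarith [two_rpow_neg_le_one (a := (n:ℝ)) (Nat.cast_nonneg n)]
  set g : Ed d → ℝ := fun x => mderiv k (Kn n x) y with hg
  have hgcont : Continuous g :=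
    slice_cont (H := fun x' y' => mderiv k (Kn n x') y') (isCmr_joint_cont (hreg n) hk) y
  have hgvan : ∀ x : Ed d, ρn < dist x y → g x = 0 := by
    intro x hx
    exact mderiv_slice_vanish (hsupp n) hx k
  have hg_cs : HasCompactSupport g := by
    refine HasCompactSupport.of_support_subset_isCompact (isCompact_closedBall y ρn) ?_
    intro x hx
    rw [mem_closedBall]
    by_contra hc'
    exact hx (hgvan x (by push_neg at hc'; exact hc'))
  by_cases hy : y ∈ Metric.cthickening ρ K
  · -- main case
    have hyK2 : y ∈ K2 := by
      rw [hK2]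
      exact Metric.cthickening_mono (by linarith) K hy
    have hxK2 : ∀ x ∈ Metric.closedBall y ρn, x ∈ K2 := by
      intro x hx
      rw [hK2]
      have h2 := mem_cthick_trans (le_of_lt hρ) (le_of_lt hρn0) hy (mem_closedBall.1 hx)
      have h3 : ρ + ρn ≤ 2 * ρ := by linarith
      exact Metric.cthickening_mono h3 K h2
    have hrpowE : (0:ℝ) < 2 ^ ((((d:ℝ) - β + (mdeg k:ℝ))) * n) := Real.rpow_pos_of_pos two_pos _
    set T : Ed d → ℝ := fun x => ∑ j ∈ Finset.range r, ((j.factorial:ℝ))⁻¹ *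
        (∑ m : Fin j → Fin d, mpow (x - y) (cnt m) * mderiv (cnt m) ψ y) with hT
    have hTrem : ∀ x, |ψ x - T x| ≤ ((d:ℝ)^r * ‖x - y‖^r) * crNorm r ψ := by
      intro x
      have h5 := taylor_multi (r := r) hψs hψc y (x - y)
      rw [add_sub_cancel] at h5
      exact h5
    have hTcont : Continuous T := by
      refine continuous_finset_sum _ (fun j _ => Continuous.mul continuous_const ?_)
      exact continuous_finset_sum _ (fun m _ => (cont_mpow y (cnt m)).mul continuous_const)
    have hint : ∀ F : Ed d → ℝ, Continuous F → Integrable (fun x => F x * g x) := by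
      intro F hF
      exact (hF.mul hgcont).integrable_of_hasCompactSupport (hg_cs.mul_left)
    have hmom' : ∀ l : MIdx d, mdeg l ≤ r →
        |∫ x, mpow (x - y) l * g x| ≤ c * 2 ^ (-(β * (n:ℝ))) := by
      intro l hl
      have h1 : (fun x => mpow (x - y) l * g x)
          = fun x => ((-1:ℝ))^(mdeg l) * (mpow (y - x) l * g x) := by
        funext x
        rw [mpow_neg_sub]
        ring
      rw [h1, integral_const_mul, abs_mul, abs_pow, abs_neg, abs_one, one_pow, one_mul]
      exact hmom n k l hk hl y hyK2
    have hptg : ∀ x ∈ Metric.closedBall y ρn,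
        |g x| ≤ c * 2 ^ ((((d:ℝ) - β + (mdeg k:ℝ))) * n) := by
      intro x hx
      have h5 := hpt n (fun _ => 0) k (by simp [mdeg]) hk x (hxK2 x hx) y hyK2
      rw [mixDeriv_eq_mderiv (fun _ => rfl)] at h5
      have h7 : mdeg (fun _ : Fin d => (0:ℕ)) = 0 := by simp [mdeg]
      rw [h7] at h5
      simpa using h5
    have hsplit : (∫ x, ψ x * g x) = (∫ x, T x * g x) + ∫ x, (ψ x - T x) * g x := by
      rw [← integral_add (hint T hTcont) (hint (fun x => ψ x - T x) ((hψs.continuous).sub hTcont))]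
      congr 1
      funext x
      ring
    have hTpart : |∫ x, T x * g x| ≤ A * 2 ^ (-(β * (n:ℝ))) * crNorm r ψ := by
      have he : (fun x => T x * g x) = fun x => ∑ j ∈ Finset.range r,
          ∑ m : Fin j → Fin d, (((j.factorial:ℝ))⁻¹ * mderiv (cnt m) ψ y) *
            (mpow (x - y) (cnt m) * g x) := by
        funext x
        simp only [hT]
        rw [Finset.sum_mul]
        refine Finset.sum_congr rfl (fun j _ => ?_)
        rw [mul_assoc, Finset.sum_mul, Finset.mul_sum]
        refine Finset.sum_congr rfl (fun m _ => by ring)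
      have hintm : ∀ (j : ℕ) (m : Fin j → Fin d), Integrable (fun x =>
          (((j.factorial:ℝ))⁻¹ * mderiv (cnt m) ψ y) * (mpow (x - y) (cnt m) * g x)) :=
        fun j m => (hint _ (cont_mpow y (cnt m))).const_mul _
      rw [he, integral_finset_sum _ (fun j _ => integrable_finset_sum _ (fun m _ => hintm j m))]
      have h8 : ∀ j ∈ Finset.range r,
          (∫ x, ∑ m : Fin j → Fin d, (((j.factorial:ℝ))⁻¹ * mderiv (cnt m) ψ y) *
            (mpow (x - y) (cnt m) * g x))
          = ∑ m : Fin j → Fin d, (((j.factorial:ℝ))⁻¹ * mderiv (cnt m) ψ y) *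
            ∫ x, mpow (x - y) (cnt m) * g x := by
        intro j _
        rw [integral_finset_sum _ (fun m _ => hintm j m)]
        exact Finset.sum_congr rfl (fun m _ => integral_const_mul _ _)
      rw [Finset.sum_congr rfl h8]
      have hterm : ∀ j ∈ Finset.range r,
          |∑ m : Fin j → Fin d, (((j.factorial:ℝ))⁻¹ * mderiv (cnt m) ψ y) *
            ∫ x, mpow (x - y) (cnt m) * g x|
          ≤ (d:ℝ)^j * (crNorm r ψ * (c * 2 ^ (-(β * (n:ℝ))))) := by
        intro j hj
        rw [Finset.mem_range] at hj
        calc |∑ m : Fin j → Fin d, (((j.factorial:ℝ))⁻¹ * mderiv (cnt m) ψ y) *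
            ∫ x, mpow (x - y) (cnt m) * g x|
            ≤ ∑ m : Fin j → Fin d, |(((j.factorial:ℝ))⁻¹ * mderiv (cnt m) ψ y) *
              ∫ x, mpow (x - y) (cnt m) * g x| := Finset.abs_sum_le_sum_abs _ _
        _ ≤ ∑ m : Fin j → Fin d, crNorm r ψ * (c * 2 ^ (-(β * (n:ℝ)))) := by
            refine Finset.sum_le_sum (fun m _ => ?_)
            rw [abs_mul, abs_mul]
            have hf1 : |((j.factorial:ℝ))⁻¹| ≤ 1 := by
              rw [abs_of_nonneg (by positivity)]
              rw [inv_le_one_iff₀]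
              right
              exact_mod_cast Nat.one_le_iff_ne_zero.2 (Nat.factorial_ne_zero j)
            have hf2 : |mderiv (cnt m) ψ y| ≤ crNorm r ψ :=
              abs_mderiv_le_crNorm_of_test hψs hψc (by rw [mdeg_cnt]; omega) y
            have hf3 := hmom' (cnt m) (by rw [mdeg_cnt]; omega)
            calc |((j.factorial:ℝ))⁻¹| * |mderiv (cnt m) ψ y| *
                |∫ x, mpow (x - y) (cnt m) * g x|
                ≤ 1 * crNorm r ψ * (c * 2 ^ (-(β * (n:ℝ)))) := by
                  refine mul_le_mul (mul_le_mul hf1 hf2 (abs_nonneg _) (by norm_num))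
                    hf3 (abs_nonneg _) (by positivity)
            _ = crNorm r ψ * (c * 2 ^ (-(β * (n:ℝ)))) := by ring
        _ = (d:ℝ)^j * (crNorm r ψ * (c * 2 ^ (-(β * (n:ℝ))))) := by
            rw [Finset.sum_const]
            have hcard : (Finset.univ : Finset (Fin j → Fin d)).card = d ^ j := by
              simp [Fintype.card_fun]
            rw [hcard]
            push_cast
            ring
      calc |∑ j ∈ Finset.range r, ∑ m : Fin j → Fin d,
            (((j.factorial:ℝ))⁻¹ * mderiv (cnt m) ψ y) * ∫ x, mpow (x - y) (cnt m) * g x|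
          ≤ ∑ j ∈ Finset.range r, |∑ m : Fin j → Fin d,
            (((j.factorial:ℝ))⁻¹ * mderiv (cnt m) ψ y) * ∫ x, mpow (x - y) (cnt m) * g x| :=
            Finset.abs_sum_le_sum_abs _ _
      _ ≤ ∑ j ∈ Finset.range r, (d:ℝ)^j * (crNorm r ψ * (c * 2 ^ (-(β * (n:ℝ))))) :=
            Finset.sum_le_sum hterm
      _ = A * 2 ^ (-(β * (n:ℝ))) * crNorm r ψ := by
            rw [← Finset.sum_mul, hA]
            ring
    have hremzero : ∀ x ∉ Metric.closedBall y ρn, (ψ x - T x) * g x = 0 := by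
      intro x hx
      rw [mem_closedBall] at hx
      push_neg at hx
      rw [hgvan x hx, mul_zero]
    have hvol : (volume (Metric.closedBall y ρn)).toReal = ρn ^ d * Vd := by
      rw [MeasureTheory.Measure.addHaar_closedBall volume y (le_of_lt hρn0)]
      rw [ENNReal.toReal_mul, ENNReal.toReal_ofReal (by positivity)]
      rw [hVd]
      congr 2
      exact finrank_euclideanSpace_fin
    have hrem : |∫ x, (ψ x - T x) * g x| ≤ B * 2 ^ (-(β * (n:ℝ))) * crNorm r ψ := by
      rw [← setIntegral_eq_integral_of_forall_compl_eq_zero hremzero]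
      have hbd : ∀ x ∈ Metric.closedBall y ρn, ‖(ψ x - T x) * g x‖
          ≤ ((d:ℝ)^r * ρn^r * crNorm r ψ) * (c * 2 ^ ((((d:ℝ) - β + (mdeg k:ℝ))) * n)) := by
        intro x hx
        rw [norm_mul, Real.norm_eq_abs, Real.norm_eq_abs]
        have h2 : ‖x - y‖ ≤ ρn := by rw [← dist_eq_norm]; exact mem_closedBall.1 hx
        have h3 : ‖x - y‖^r ≤ ρn^r := pow_le_pow_left₀ (norm_nonneg _) h2 r
        have h1 : |ψ x - T x| ≤ (d:ℝ)^r * ρn^r * crNorm r ψ := by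
          refine le_trans (hTrem x) ?_
          refine mul_le_mul_of_nonneg_right ?_ hcrn
          exact mul_le_mul_of_nonneg_left h3 (by positivity)
        exact mul_le_mul h1 (hptg x hx) (abs_nonneg _) (by positivity)
      have hmeas : (volume (Metric.closedBall y ρn)) < ⊤ := measure_closedBall_lt_top
      have hint2 := norm_setIntegral_le_of_norm_le_const hmeas hbd
      rw [Real.norm_eq_abs, measureReal_def] at hint2
      refine le_trans hint2 ?_
      rw [hvol]
      have hexp : ρn ^ r * ρn ^ d * 2 ^ ((((d:ℝ) - β + (mdeg k:ℝ))) * n)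
          ≤ ρ^(r+d) * 2 ^ (-(β * (n:ℝ))) := by
        have h4 : ρn ^ r * ρn ^ d = ρ^(r+d) * ((2:ℝ) ^ (-(n:ℝ)))^(r+d) := by
          rw [hρn]
          ring
        rw [h4, mul_assoc]
        refine mul_le_mul_of_nonneg_left ?_ (by positivity)
        have h5 : ((2:ℝ) ^ (-(n:ℝ)))^(r+d) = (2:ℝ) ^ ((-(n:ℝ)) * (((r:ℕ)+(d:ℕ) : ℕ):ℝ)) := by
          rw [← Real.rpow_natCast ((2:ℝ) ^ (-(n:ℝ))) (r+d), ← Real.rpow_mul (by norm_num)]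
        rw [h5, ← Real.rpow_add two_pos]
        refine Real.rpow_le_rpow_of_exponent_le one_le_two ?_
        have hkr : (mdeg k : ℝ) ≤ (r:ℝ) := by exact_mod_cast hk
        have hn0 : (0:ℝ) ≤ (n:ℝ) := Nat.cast_nonneg n
        push_cast
        nlinarith
      calc ((d:ℝ)^r * ρn^r * crNorm r ψ) * (c * 2 ^ ((((d:ℝ) - β + (mdeg k:ℝ))) * n))
            * (ρn ^ d * Vd)
          = (c * Vd * (d:ℝ)^r) *
            (ρn^r * ρn^d * 2 ^ ((((d:ℝ) - β + (mdeg k:ℝ))) * n)) * crNorm r ψ := by ring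
      _ ≤ (c * Vd * (d:ℝ)^r) * (ρ^(r+d) * 2 ^ (-(β * (n:ℝ)))) * crNorm r ψ := by
            refine mul_le_mul_of_nonneg_right
              (mul_le_mul_of_nonneg_left hexp (by positivity)) hcrn
      _ = B * 2 ^ (-(β * (n:ℝ))) * crNorm r ψ := by rw [hB]; ring
    rw [hsplit]
    calc |(∫ x, T x * g x) + ∫ x, (ψ x - T x) * g x|
        ≤ |∫ x, T x * g x| + |∫ x, (ψ x - T x) * g x| := abs_add_le _ _
    _ ≤ A * 2 ^ (-(β * (n:ℝ))) * crNorm r ψ + B * 2 ^ (-(β * (n:ℝ))) * crNorm r ψ :=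
        add_le_add hTpart hrem
    _ = (A+B) * 2 ^ (-(β * (n:ℝ))) * crNorm r ψ := by ring
  · -- y far away: integrand vanishes
    have hzero : ∀ x, ψ x * g x = 0 := by
      intro x
      by_cases hψx : ψ x = 0
      · rw [hψx, zero_mul]
      · have hx : x ∈ K := hψsupp (subset_closure hψx)
        have hfar : ρn < dist x y := by
          by_contra hc'
          push_neg at hc'
          exact hy (Metric.mem_cthickening_of_dist_le y x ρ K hx
            (by rw [dist_comm]; linarith))
        rw [hgvan x hfar, mul_zero]
    have : (∫ x, ψ x * g x) = 0 := by
      rw [show (fun x => ψ x * g x) = fun _ => (0:ℝ) from funext hzero]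
      exact integral_zero _ _
    rw [this, abs_zero]
    positivity

end CoreEstimate
section C1
variable {d : ℕ}

lemma hasFDerivAt_of_partials {u : Ed d → ℝ} {v : Fin d → Ed d → ℝ}
    (hv : ∀ i, Continuous (v i))
    (hd : ∀ (i : Fin d) (z : Ed d), HasLineDerivAt ℝ u (v i z) z (eb i)) (p : Ed d) :
    HasFDerivAt u (∑ i : Fin d, v i p • (EuclideanSpace.proj i : Ed d →L[ℝ] ℝ)) p := by
  classical
  set L : Ed d →L[ℝ] ℝ := ∑ i : Fin d, v i p • (EuclideanSpace.proj i : Ed d →L[ℝ] ℝ)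
    with hLdef
  have hLapp : ∀ h : Ed d, L h = ∑ i : Fin d, v i p * h i := by
    intro h
    rw [hLdef, ContinuousLinearMap.sum_apply]
    refine Finset.sum_congr rfl (fun i _ => ?_)
    rw [ContinuousLinearMap.smul_apply]
    rfl
  rw [hasFDerivAt_iff_isLittleO_nhds_zero, Asymptotics.isLittleO_iff]
  intro ε hε
  set ε' := ε / ((d:ℝ) + 1) with hε'def
  have hε'0 : 0 < ε' := by positivity
  set V : Ed d → ℝ := fun z => ∑ i : Fin d, |v i z - v i p| with hVdef
  have hVc : Continuous V :=
    continuous_finset_sum _ (fun i _ => ((hv i).sub continuous_const).abs)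
  have hV0 : V p = 0 := by simp [hVdef]
  obtain ⟨δ, hδ0, hδ⟩ := Metric.continuousAt_iff.1 hVc.continuousAt ε' hε'0
  have hvsmall : ∀ (i : Fin d) (z : Ed d), dist z p < δ → |v i z - v i p| ≤ ε' := by
    intro i z hz
    have h1 := hδ hz
    rw [hV0, Real.dist_eq, sub_zero] at h1
    have h2 : |v i z - v i p| ≤ V z :=
      Finset.single_le_sum (f := fun i => |v i z - v i p|)
        (fun i _ => abs_nonneg _) (Finset.mem_univ i)
    have h3 : V z ≤ |V z| := le_abs_self _
    linarith
  set δ₂ := δ / ((d:ℝ) + 1) with hδ₂def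
  have hδ₂0 : 0 < δ₂ := by positivity
  have key : ∀ h : Ed d, ‖h‖ < δ₂ → ∀ S : Finset (Fin d),
      |u (p + ∑ i ∈ S, h i • eb i) - u p - ∑ i ∈ S, h i * v i p|
        ≤ ε' * ∑ i ∈ S, |h i| := by
    intro h hh S
    induction S using Finset.induction_on with
    | empty => simp
    | @insert a S ha ih =>
        set z := p + ∑ i ∈ S, h i • eb i with hzdef
        have hsum_le : ∀ T : Finset (Fin d), ‖∑ i ∈ T, h i • eb i‖ ≤ (d:ℝ) * ‖h‖ := by
          intro T
          calc ‖∑ i ∈ T, h i • eb i‖ ≤ ∑ i ∈ T, ‖h i • eb i‖ := norm_sum_le _ _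
          _ = ∑ i ∈ T, |h i| := by
              refine Finset.sum_congr rfl (fun i _ => ?_)
              rw [norm_smul, norm_eb, mul_one, Real.norm_eq_abs]
          _ ≤ ∑ _i ∈ T, ‖h‖ := Finset.sum_le_sum (fun i _ => coord_abs_le_norm h i)
          _ = T.card * ‖h‖ := by rw [Finset.sum_const, nsmul_eq_mul]
          _ ≤ (d:ℝ) * ‖h‖ := by
              refine mul_le_mul_of_nonneg_right ?_ (norm_nonneg _)
              have hcle : T.card ≤ d := le_trans (Finset.card_le_univ T) (by simp)
              exact_mod_cast hcle
        have hseg : |u (z + h a • eb a) - u z - h a * v a p| ≤ ε' * |h a| := by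
          have hφ : ∀ s ∈ Metric.closedBall (0:ℝ) ‖h‖,
              HasDerivWithinAt (fun s' : ℝ => u (z + s' • eb a) - s' * v a p)
                (v a (z + s • eb a) - v a p) (Metric.closedBall (0:ℝ) ‖h‖) s := by
            intro s _
            have h1 : HasDerivAt (fun s' : ℝ => u (z + s' • eb a)) (v a (z + s • eb a)) s :=
              hasDerivAt_line_shift (hd a _)
            have h2 : HasDerivAt (fun s' : ℝ => s' * v a p) (v a p) s := by
              simpa using (hasDerivAt_id s).mul_const (v a p)
            exact (h1.sub h2).hasDerivWithinAt
          have hφb : ∀ s ∈ Metric.closedBall (0:ℝ) ‖h‖,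
              ‖v a (z + s • eb a) - v a p‖ ≤ ε' := by
            intro s hs
            have hs' : |s| ≤ ‖h‖ := by simpa [Real.dist_eq] using mem_closedBall.1 hs
            have hdist : dist (z + s • eb a) p < δ := by
              rw [dist_eq_norm]
              have he : z + s • eb a - p = (∑ i ∈ S, h i • eb i) + s • eb a := by
                rw [hzdef]; abel
              rw [he]
              calc ‖(∑ i ∈ S, h i • eb i) + s • eb a‖
                  ≤ ‖∑ i ∈ S, h i • eb i‖ + ‖s • eb a‖ := norm_add_le _ _
              _ ≤ (d:ℝ) * ‖h‖ + ‖h‖ := by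
                  refine add_le_add (hsum_le S) ?_
                  rw [norm_smul, norm_eb, mul_one, Real.norm_eq_abs]
                  exact hs'
              _ = ((d:ℝ) + 1) * ‖h‖ := by ring
              _ < ((d:ℝ) + 1) * δ₂ := by
                  refine mul_lt_mul_of_pos_left hh (by positivity)
              _ = δ := by
                  rw [hδ₂def]
                  field_simp
            rw [Real.norm_eq_abs]
            exact hvsmall a _ hdist
          have hconv := Convex.norm_image_sub_le_of_norm_hasDerivWithin_le hφ hφb
            (convex_closedBall _ _) (mem_closedBall_self (norm_nonneg h))
            (show h a ∈ Metric.closedBall (0:ℝ) ‖h‖ by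
              simpa [Real.dist_eq] using coord_abs_le_norm h a)
          have h9 : |(u (z + h a • eb a) - h a * v a p) - u z| ≤ ε' * |h a| := by
            simpa [Real.norm_eq_abs] using hconv
          have e2 : u (z + h a • eb a) - u z - h a * v a p
              = (u (z + h a • eb a) - h a * v a p) - u z := by ring
          rw [e2]; exact h9
        have hins1 : p + ∑ i ∈ insert a S, h i • eb i = z + h a • eb a := by
          rw [Finset.sum_insert ha, hzdef]; abel
        have hins2 : ∑ i ∈ insert a S, h i * v i p
            = h a * v a p + ∑ i ∈ S, h i * v i p := Finset.sum_insert ha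
        have hins3 : ∑ i ∈ insert a S, |h i| = |h a| + ∑ i ∈ S, |h i| :=
          Finset.sum_insert ha
        rw [hins1, hins2, hins3]
        calc |u (z + h a • eb a) - u p - (h a * v a p + ∑ i ∈ S, h i * v i p)|
            = |(u (z + h a • eb a) - u z - h a * v a p)
              + (u z - u p - ∑ i ∈ S, h i * v i p)| := by ring_nf
        _ ≤ |u (z + h a • eb a) - u z - h a * v a p|
              + |u z - u p - ∑ i ∈ S, h i * v i p| := abs_add_le _ _
        _ ≤ ε' * |h a| + ε' * ∑ i ∈ S, |h i| := add_le_add hseg ih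
        _ = ε' * (|h a| + ∑ i ∈ S, |h i|) := by ring
  rw [Metric.eventually_nhds_iff]
  refine ⟨δ₂, hδ₂0, fun {h} hhd => ?_⟩
  have hh : ‖h‖ < δ₂ := by simpa [dist_zero_right] using hhd
  have hk := key h hh Finset.univ
  rw [← euclid_decomp h] at hk
  have hLh : L h = ∑ i : Fin d, v i p * h i := hLapp h
  have hsum2 : ∑ i : Fin d, h i * v i p = L h := by
    rw [hLh]
    exact Finset.sum_congr rfl (fun i _ => by ring)
  rw [hsum2] at hk
  have habs : ∑ i : Fin d, |h i| ≤ (d:ℝ) * ‖h‖ := by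
    calc ∑ i : Fin d, |h i| ≤ ∑ _i : Fin d, ‖h‖ :=
          Finset.sum_le_sum (fun i _ => coord_abs_le_norm h i)
    _ = (d:ℝ) * ‖h‖ := by rw [Finset.sum_const, nsmul_eq_mul]; simp
  calc ‖u (p + h) - u p - L h‖ = |u (p + h) - u p - L h| := rfl
  _ ≤ ε' * ∑ i : Fin d, |h i| := hk
  _ ≤ ε' * ((d:ℝ) * ‖h‖) := mul_le_mul_of_nonneg_left habs (le_of_lt hε'0)
  _ ≤ ε * ‖h‖ := by
      rw [hε'def]
      rw [div_mul_eq_mul_div, mul_comm]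
      rw [div_le_iff₀ (by positivity : (0:ℝ) < (d:ℝ) + 1)]
      have hn : (0:ℝ) ≤ ‖h‖ := norm_nonneg h
      nlinarith

lemma contDiff_of_partial_system (G : MIdx d → Ed d → ℝ)
    (hGc : ∀ k, Continuous (G k))
    (hGd : ∀ (k : MIdx d) (i : Fin d) (z : Ed d),
      HasLineDerivAt ℝ (G k) (G (madd k i) z) z (eb i)) :
    ∀ (n : ℕ) (k : MIdx d), ContDiff ℝ (n : ℕ) (G k) := by
  intro n
  induction n with
  | zero =>
      intro k
      rw [show ((0:ℕ) : WithTop ℕ∞) = 0 from rfl, contDiff_zero]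
      exact hGc k
  | succ n ih =>
      intro k
      have hF : ∀ z : Ed d, HasFDerivAt (G k)
          (∑ i : Fin d, G (madd k i) z • (EuclideanSpace.proj i : Ed d →L[ℝ] ℝ)) z :=
        fun z => hasFDerivAt_of_partials (fun i => hGc (madd k i)) (fun i z' => hGd k i z') z
      have hcast : ((n + 1 : ℕ) : WithTop ℕ∞) = (n : ℕ) + 1 := by push_cast; rfl
      rw [hcast, contDiff_succ_iff_fderiv]
      refine ⟨fun z => (hF z).differentiableAt, ?_, ?_⟩
      · intro hcontra
        exfalso
        exact (by simp at hcontra : False)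
      · have hfd : (fderiv ℝ (G k)) = fun z => ∑ i : Fin d,
            G (madd k i) z • (EuclideanSpace.proj i : Ed d →L[ℝ] ℝ) :=
          funext fun z => (hF z).fderiv
        rw [hfd]
        exact ContDiff.sum (fun i _ => (ih (madd k i)).smul contDiff_const)

lemma kstar_smooth {Kf : Ed d → Ed d → ℝ} (hKf : ∀ r : ℕ, IsCmr 0 r Kf)
    {ψ : Ed d → ℝ} (hψ : Continuous ψ) (hcs : HasCompactSupport ψ) :
    ContDiff ℝ (⊤:ℕ∞) (kstar Kf ψ) := by
  set G : MIdx d → Ed d → ℝ := fun k y => ∫ x, ψ x * mderiv k (Kf x) y with hGdef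
  have hGc : ∀ k, Continuous (G k) := fun k =>
    cont_param hψ hcs (isCmr_joint_cont (hKf (mdeg k)) le_rfl)
  have hGd : ∀ (k : MIdx d) (i : Fin d) (z : Ed d),
      HasLineDerivAt ℝ (G k) (G (madd k i) z) z (eb i) := by
    intro k i z
    refine lineDeriv_param hψ hcs (isCmr_joint_cont (hKf (mdeg k)) le_rfl)
      (isCmr_joint_cont (hKf (mdeg k + 1)) (by rw [mdeg_madd])) ?_ z
    intro x z'
    have hld : LineDifferentiableAt ℝ (mderiv k (Kf x)) z' (eb i) :=
      (isCmr_isCr_slice (hKf (mdeg k + 1)) x k (by omega)).2 (by omega) i z'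
    have h1 := hld.hasLineDerivAt
    have h2 : lineDeriv ℝ (mderiv k (Kf x)) z' (eb i) = mderiv (madd k i) (Kf x) z' :=
      congrFun (kernel_schwarz (hKf (mdeg k + 1)) x (by omega) i) z'
    rwa [h2] at h1
  have hG0 : G (fun _ => 0) = kstar Kf ψ := by
    funext y
    rw [hGdef]
    unfold kstar
    refine congrArg _ (funext fun x => ?_)
    rw [mderiv_eq_self _ (fun _ => rfl)]
  rw [← hG0]
  rw [contDiff_infty]
  exact fun n => contDiff_of_partial_system G hGc hGd n _

lemma kstar_tsupport {Kf : Ed d → Ed d → ℝ} {ρ' : ℝ}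
    (hs : ∀ x y, Kf x y ≠ 0 → dist x y ≤ ρ') {ψ : Ed d → ℝ} {K : Set (Ed d)}
    (hψK : tsupport ψ ⊆ K) :
    tsupport (kstar Kf ψ) ⊆ Metric.cthickening ρ' K := by
  refine closure_minimal ?_ Metric.isClosed_cthickening
  intro y hy
  rw [Function.mem_support] at hy
  by_contra hyc
  apply hy
  have hz : ∀ x, ψ x * Kf x y = 0 := by
    intro x
    by_cases hx : ψ x = 0
    · rw [hx, zero_mul]
    · by_cases hK0 : Kf x y = 0
      · rw [hK0, mul_zero]
      · exact absurd (Metric.mem_cthickening_of_dist_le y x ρ' K (hψK (subset_closure hx))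
          (by rw [dist_comm]; exact hs x y hK0)) hyc
  unfold kstar
  rw [show (fun x => ψ x * Kf x y) = fun _ => (0:ℝ) from funext hz]
  exact integral_zero _ _

lemma isCmr_kernel_cont {r : ℕ} {Kf : Ed d → Ed d → ℝ} (hKf : IsCmr 0 r Kf) :
    Continuous fun p : Ed d × Ed d => Kf p.1 p.2 := by
  have h := isCmr_joint_cont hKf (l := fun _ => 0) (by simp [mdeg])
  have he : (fun p : Ed d × Ed d => mderiv (fun _ => 0) (Kf p.1) p.2)
      = fun p : Ed d × Ed d => Kf p.1 p.2 := by
    funext p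
    rw [mderiv_eq_self _ (fun _ => rfl)]
  rwa [he] at h

lemma kstar_add {Kf : Ed d → Ed d → ℝ} (hKc : Continuous fun p : Ed d × Ed d => Kf p.1 p.2)
    {φ ψ : Ed d → ℝ} (hφ : Continuous φ) (hφc : HasCompactSupport φ)
    (hψ : Continuous ψ) (hψc : HasCompactSupport ψ) :
    kstar Kf (φ + ψ) = kstar Kf φ + kstar Kf ψ := by
  funext y
  unfold kstar
  have he : (fun x => (φ + ψ) x * Kf x y) = fun x => φ x * Kf x y + ψ x * Kf x y := by
    funext x
    rw [Pi.add_apply]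
    ring
  rw [he, integral_add (integrable_slice hφ hφc hKc y) (integrable_slice hψ hψc hKc y)]
  rfl

lemma kstar_smul {Kf : Ed d → Ed d → ℝ} (c : ℝ) (ψ : Ed d → ℝ) :
    kstar Kf (c • ψ) = c • kstar Kf ψ := by
  funext y
  unfold kstar
  have he : (fun x => (c • ψ) x * Kf x y) = fun x => c * (ψ x * Kf x y) := by
    funext x
    rw [Pi.smul_apply, smul_eq_mul]
    ring
  rw [he, integral_const_mul]
  rfl

end C1
section Assemble
variable {d : ℕ}

lemma rpow_geom (β : ℝ) (n : ℕ) : (2:ℝ) ^ (-(β * (n:ℝ))) = ((2:ℝ) ^ (-β)) ^ n := by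
  rw [← Real.rpow_natCast ((2:ℝ) ^ (-β)) n, ← Real.rpow_mul (by norm_num)]
  ring_nf

lemma regker_supp_le {β ρ : ℝ} (hρ : 0 < ρ) {Kn : ℕ → Ed d → Ed d → ℝ} {r : ℕ}
    (hK : RegKer d β 0 r ρ Kn) (n : ℕ) :
    ∀ x y : Ed d, Kn n x y ≠ 0 → dist x y ≤ ρ := by
  intro x y h
  have h1 := hK.2.1 n x y h
  have h2 : (2:ℝ) ^ (-(n:ℝ)) ≤ 1 := two_rpow_neg_le_one (Nat.cast_nonneg n)
  nlinarith

lemma kstar_key {β ρ : ℝ} (hβ : 0 < β) (hρ : 0 < ρ) {Kn : ℕ → Ed d → Ed d → ℝ}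
    {r : ℕ} (hK : RegKer d β 0 r ρ Kn) {K : Set (Ed d)} (hKc : IsCompact K) :
    ∃ C : ℝ, 0 ≤ C ∧ ∀ ψ : Ed d → ℝ, ContDiff ℝ (⊤:ℕ∞) ψ → HasCompactSupport ψ →
      tsupport ψ ⊆ K → ∀ n : ℕ,
        crNorm r (kstar (Kn n) ψ) ≤ C * 2 ^ (-(β * (n:ℝ))) * crNorm r ψ := by
  obtain ⟨C, hC0, hC⟩ := core_estimate hβ hρ hK hKc
  refine ⟨C, hC0, fun ψ hψs hψc hψK n => ?_⟩
  have hnn : (0:ℝ) ≤ C * 2 ^ (-(β * (n:ℝ))) * crNorm r ψ :=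
    mul_nonneg (mul_nonneg hC0 (le_of_lt (Real.rpow_pos_of_pos two_pos _)))
      (crNorm_nonneg r ψ)
  refine crNorm_le hnn ?_
  intro k hk z
  rw [show mderiv k (kstar (Kn n) ψ) = fun y => ∫ x, ψ x * mderiv k (Kn n x) y from
    (kstar_mderiv_repr (hK.1 n) hψs.continuous hψc k hk).1]
  exact hC ψ hψs hψc hψK n k hk z

lemma kstar_hcs {β ρ : ℝ} (hρ : 0 < ρ) {Kn : ℕ → Ed d → Ed d → ℝ} {r : ℕ}
    (hK : RegKer d β 0 r ρ Kn) (n : ℕ) {ψ : Ed d → ℝ} {K : Set (Ed d)}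
    (hKc : IsCompact K) (hψK : tsupport ψ ⊆ K) :
    tsupport (kstar (Kn n) ψ) ⊆ Metric.cthickening ρ K ∧
      HasCompactSupport (kstar (Kn n) ψ) := by
  have hts : tsupport (kstar (Kn n) ψ) ⊆ Metric.cthickening ρ K :=
    kstar_tsupport (regker_supp_le hρ hK n) hψK
  exact ⟨hts, IsCompact.of_isClosed_subset (hKc.cthickening)
    (isClosed_tsupport _) hts⟩

end Assemble
/-- Proposition 2.8, singular integration: if `𝖪` is a regularising kernel
of order `(0,r)` and `f` is a distribution of order `r` (acting canonically on compactly
supported `C^r` functions), then `𝖪f(ψ) = Σ_n f(𝖪_n^*ψ)` converges for every test function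
and defines a distribution of order `r`.  If the kernel is of order `(0,r)` for every `r`,
then `𝖪f` is well-defined for every distribution `f`. -/
theorem singular_integration
    (d : ℕ) (β ρ : ℝ) (hβ : 0 < β) (hρ : 0 < ρ)
    (Kn : ℕ → Ed d → Ed d → ℝ) :
    (∀ r : ℕ, RegKer d β 0 r ρ Kn →
      ∀ f : DFunc d, IsDistribution f → OrderExt f r →
        ∃ g : DFunc d, IsDistribution g ∧ DistOrder g r ∧
          ∀ ψ : Ed d → ℝ, IsTest ψ → HasSum (fun n => f (kstar (Kn n) ψ)) (g ψ)) ∧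
    ((∀ r : ℕ, RegKer d β 0 r ρ Kn) →
      ∀ f : DFunc d, IsDistribution f →
        ∃ g : DFunc d, IsDistribution g ∧
          ∀ ψ : Ed d → ℝ, IsTest ψ → HasSum (fun n => f (kstar (Kn n) ψ)) (g ψ)) := by
  have hq0 : (0:ℝ) ≤ (2:ℝ) ^ (-β) := le_of_lt (Real.rpow_pos_of_pos two_pos _)
  have hq1 : (2:ℝ) ^ (-β) < 1 :=
    Real.rpow_lt_one_of_one_lt_of_neg one_lt_two (by linarith)
  have hqsum : Summable (fun n : ℕ => ((2:ℝ) ^ (-β)) ^ n) :=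
    summable_geometric_of_lt_one hq0 hq1
  have htq0 : (0:ℝ) ≤ ∑' n : ℕ, ((2:ℝ) ^ (-β)) ^ n :=
    tsum_nonneg (fun n => pow_nonneg hq0 n)
  constructor
  · -- Part 1
    intro r hK f hf hext
    have hdata : ∀ K : Set (Ed d), IsCompact K → ∃ D : ℝ, 0 ≤ D ∧
        ∀ ψ : Ed d → ℝ, IsTest ψ → tsupport ψ ⊆ K → ∀ n : ℕ,
          |f (kstar (Kn n) ψ)| ≤ (D * ((2:ℝ) ^ (-β)) ^ n) * crNorm r ψ := by
      intro K hKc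
      obtain ⟨Ce, hCe0, hCe⟩ := kstar_key hβ hρ hK hKc
      obtain ⟨Cf, hCf⟩ := hext.2.2 (Metric.cthickening ρ K) (hKc.cthickening)
      refine ⟨max Cf 0 * Ce, by positivity, ?_⟩
      intro ψ hψ hψK n
      obtain ⟨hts, hcs⟩ := kstar_hcs hρ hK n hKc hψK
      have hcr : IsCr r (kstar (Kn n) ψ) := kstar_isCr (hK.1 n) hψ.1.continuous hψ.2
      have h1 := hCf (kstar (Kn n) ψ) hcr hcs hts
      have h2 := hCe ψ hψ.1 hψ.2 hψK n
      calc |f (kstar (Kn n) ψ)| ≤ Cf * crNorm r (kstar (Kn n) ψ) := h1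
      _ ≤ max Cf 0 * crNorm r (kstar (Kn n) ψ) :=
          mul_le_mul_of_nonneg_right (le_max_left _ _) (crNorm_nonneg _ _)
      _ ≤ max Cf 0 * (Ce * 2 ^ (-(β * (n:ℝ))) * crNorm r ψ) :=
          mul_le_mul_of_nonneg_left h2 (le_max_right _ _)
      _ = (max Cf 0 * Ce * ((2:ℝ) ^ (-β)) ^ n) * crNorm r ψ := by
          rw [rpow_geom]; ring
    have hsummable : ∀ ψ : Ed d → ℝ, IsTest ψ →
        Summable (fun n => |f (kstar (Kn n) ψ)|) := by
      intro ψ hψ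
      obtain ⟨D, hD0, hD⟩ := hdata (tsupport ψ) hψ.2
      refine Summable.of_nonneg_of_le (fun n => abs_nonneg _)
        (fun n => hD ψ hψ subset_rfl n) ?_
      have hS : Summable (fun n : ℕ => (D * ((2:ℝ) ^ (-β)) ^ n) * crNorm r ψ) :=
        Summable.congr (hqsum.mul_left (D * crNorm r ψ)) (fun n => by ring)
      exact hS
    have hsummable' : ∀ ψ : Ed d → ℝ, IsTest ψ →
        Summable (fun n => f (kstar (Kn n) ψ)) :=
      fun ψ hψ => (hsummable ψ hψ).of_abs
    have hord : ∀ K : Set (Ed d), IsCompact K → ∃ C : ℝ,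
        ∀ ψ : Ed d → ℝ, IsTest ψ → tsupport ψ ⊆ K →
          |∑' n, f (kstar (Kn n) ψ)| ≤ C * crNorm r ψ := by
      intro K hKc
      obtain ⟨D, hD0, hD⟩ := hdata K hKc
      refine ⟨D * ∑' n : ℕ, ((2:ℝ) ^ (-β)) ^ n, ?_⟩
      intro ψ hψ hψK
      have h1 : |∑' n, f (kstar (Kn n) ψ)| ≤ ∑' n, |f (kstar (Kn n) ψ)| := by
        have := norm_tsum_le_tsum_norm (f := fun n => f (kstar (Kn n) ψ))
          (by simpa [Real.norm_eq_abs] using hsummable ψ hψ)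
        simpa [Real.norm_eq_abs] using this
      have h2 : ∑' n, |f (kstar (Kn n) ψ)|
          ≤ ∑' n, (D * ((2:ℝ) ^ (-β)) ^ n) * crNorm r ψ := by
        refine Summable.tsum_le_tsum (fun n => hD ψ hψ hψK n) (hsummable ψ hψ) ?_
        have hS : Summable (fun n : ℕ => (D * ((2:ℝ) ^ (-β)) ^ n) * crNorm r ψ) :=
          Summable.congr (hqsum.mul_left (D * crNorm r ψ)) (fun n => by ring)
        exact hS
      have h3 : ∑' n, (D * ((2:ℝ) ^ (-β)) ^ n) * crNorm r ψ
          = (D * ∑' n : ℕ, ((2:ℝ) ^ (-β)) ^ n) * crNorm r ψ := by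
        rw [show (fun n : ℕ => (D * ((2:ℝ) ^ (-β)) ^ n) * crNorm r ψ)
            = fun n : ℕ => (D * crNorm r ψ) * ((2:ℝ) ^ (-β)) ^ n from
          funext (fun n => by ring)]
        rw [tsum_mul_left]
        ring
      linarith
    have hadd : ∀ φ ψ : Ed d → ℝ, IsTest φ → IsTest ψ →
        (∑' n, f (kstar (Kn n) (φ + ψ)))
          = (∑' n, f (kstar (Kn n) φ)) + ∑' n, f (kstar (Kn n) ψ) := by
      intro φ ψ hφ hψ
      have he : ∀ n, f (kstar (Kn n) (φ + ψ))
          = f (kstar (Kn n) φ) + f (kstar (Kn n) ψ) := by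
        intro n
        rw [kstar_add (isCmr_kernel_cont (hK.1 n)) hφ.1.continuous hφ.2
          hψ.1.continuous hψ.2]
        exact hext.1 _ _ (kstar_isCr (hK.1 n) hφ.1.continuous hφ.2)
          (kstar_hcs hρ hK n hφ.2.isCompact (subset_rfl)).2
          (kstar_isCr (hK.1 n) hψ.1.continuous hψ.2)
          (kstar_hcs hρ hK n hψ.2.isCompact (subset_rfl)).2
      rw [show (fun n => f (kstar (Kn n) (φ + ψ)))
          = fun n => f (kstar (Kn n) φ) + f (kstar (Kn n) ψ) from funext he]
      exact Summable.tsum_add (hsummable' φ hφ) (hsummable' ψ hψ)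
    have hsmul : ∀ (c : ℝ) (ψ : Ed d → ℝ), IsTest ψ →
        (∑' n, f (kstar (Kn n) (c • ψ))) = c * ∑' n, f (kstar (Kn n) ψ) := by
      intro c ψ hψ
      have he : ∀ n, f (kstar (Kn n) (c • ψ)) = c * f (kstar (Kn n) ψ) := by
        intro n
        rw [kstar_smul c ψ]
        exact hext.2.1 c _ (kstar_isCr (hK.1 n) hψ.1.continuous hψ.2)
          (kstar_hcs hρ hK n hψ.2.isCompact (subset_rfl)).2
      rw [show (fun n => f (kstar (Kn n) (c • ψ)))
          = fun n => c * f (kstar (Kn n) ψ) from funext he]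
      exact tsum_mul_left
    refine ⟨fun ψ => ∑' n, f (kstar (Kn n) ψ), ⟨hadd, hsmul, ?_⟩, ?_, ?_⟩
    · intro K hKc
      obtain ⟨C, hC⟩ := hord K hKc
      exact ⟨r, C, fun ψ hψ hψK => hC ψ hψ hψK⟩
    · intro K hKc
      obtain ⟨C, hC⟩ := hord K hKc
      exact ⟨C, fun ψ hψ hψK => hC ψ hψ hψK⟩
    · intro ψ hψ
      exact (hsummable' ψ hψ).hasSum
  · -- Part 2
    intro hKall f hf
    have hdata : ∀ K : Set (Ed d), IsCompact K → ∃ (r : ℕ) (D : ℝ), 0 ≤ D ∧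
        ∀ ψ : Ed d → ℝ, IsTest ψ → tsupport ψ ⊆ K → ∀ n : ℕ,
          |f (kstar (Kn n) ψ)| ≤ (D * ((2:ℝ) ^ (-β)) ^ n) * crNorm r ψ := by
      intro K hKc
      obtain ⟨r, Cf, hCf⟩ := hf.2.2 (Metric.cthickening ρ K) (hKc.cthickening)
      obtain ⟨Ce, hCe0, hCe⟩ := kstar_key hβ hρ (hKall r) hKc
      refine ⟨r, max Cf 0 * Ce, by positivity, ?_⟩
      intro ψ hψ hψK n
      obtain ⟨hts, hcs⟩ := kstar_hcs hρ (hKall r) n hKc hψK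
      have htest : IsTest (kstar (Kn n) ψ) :=
        ⟨kstar_smooth (fun r' => (hKall r').1 n) hψ.1.continuous hψ.2, hcs⟩
      have h1 := hCf (kstar (Kn n) ψ) htest hts
      have h2 := hCe ψ hψ.1 hψ.2 hψK n
      calc |f (kstar (Kn n) ψ)| ≤ Cf * crNorm r (kstar (Kn n) ψ) := h1
      _ ≤ max Cf 0 * crNorm r (kstar (Kn n) ψ) :=
          mul_le_mul_of_nonneg_right (le_max_left _ _) (crNorm_nonneg _ _)
      _ ≤ max Cf 0 * (Ce * 2 ^ (-(β * (n:ℝ))) * crNorm r ψ) :=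
          mul_le_mul_of_nonneg_left h2 (le_max_right _ _)
      _ = (max Cf 0 * Ce * ((2:ℝ) ^ (-β)) ^ n) * crNorm r ψ := by
          rw [rpow_geom]; ring
    have hsummable : ∀ ψ : Ed d → ℝ, IsTest ψ →
        Summable (fun n => |f (kstar (Kn n) ψ)|) := by
      intro ψ hψ
      obtain ⟨r, D, hD0, hD⟩ := hdata (tsupport ψ) hψ.2
      refine Summable.of_nonneg_of_le (fun n => abs_nonneg _)
        (fun n => hD ψ hψ subset_rfl n) ?_
      have hS : Summable (fun n : ℕ => (D * ((2:ℝ) ^ (-β)) ^ n) * crNorm r ψ) :=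
        Summable.congr (hqsum.mul_left (D * crNorm r ψ)) (fun n => by ring)
      exact hS
    have hsummable' : ∀ ψ : Ed d → ℝ, IsTest ψ →
        Summable (fun n => f (kstar (Kn n) ψ)) :=
      fun ψ hψ => (hsummable ψ hψ).of_abs
    have htest' : ∀ (n : ℕ) (ψ : Ed d → ℝ), IsTest ψ → IsTest (kstar (Kn n) ψ) := by
      intro n ψ hψ
      exact ⟨kstar_smooth (fun r' => (hKall r').1 n) hψ.1.continuous hψ.2,
        (kstar_hcs hρ (hKall 0) n hψ.2.isCompact (subset_rfl)).2⟩
    have hadd : ∀ φ ψ : Ed d → ℝ, IsTest φ → IsTest ψ →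
        (∑' n, f (kstar (Kn n) (φ + ψ)))
          = (∑' n, f (kstar (Kn n) φ)) + ∑' n, f (kstar (Kn n) ψ) := by
      intro φ ψ hφ hψ
      have he : ∀ n, f (kstar (Kn n) (φ + ψ))
          = f (kstar (Kn n) φ) + f (kstar (Kn n) ψ) := by
        intro n
        rw [kstar_add (isCmr_kernel_cont ((hKall 0).1 n)) hφ.1.continuous hφ.2
          hψ.1.continuous hψ.2]
        exact hf.1 _ _ (htest' n φ hφ) (htest' n ψ hψ)
      rw [show (fun n => f (kstar (Kn n) (φ + ψ)))
          = fun n => f (kstar (Kn n) φ) + f (kstar (Kn n) ψ) from funext he]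
      exact Summable.tsum_add (hsummable' φ hφ) (hsummable' ψ hψ)
    have hsmul : ∀ (c : ℝ) (ψ : Ed d → ℝ), IsTest ψ →
        (∑' n, f (kstar (Kn n) (c • ψ))) = c * ∑' n, f (kstar (Kn n) ψ) := by
      intro c ψ hψ
      have he : ∀ n, f (kstar (Kn n) (c • ψ)) = c * f (kstar (Kn n) ψ) := by
        intro n
        rw [kstar_smul c ψ]
        exact hf.2.1 c _ (htest' n ψ hψ)
      rw [show (fun n => f (kstar (Kn n) (c • ψ)))
          = fun n => c * f (kstar (Kn n) ψ) from funext he]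
      exact tsum_mul_left
    refine ⟨fun ψ => ∑' n, f (kstar (Kn n) ψ), ⟨hadd, hsmul, ?_⟩, ?_⟩
    · intro K hKc
      obtain ⟨r, D, hD0, hD⟩ := hdata K hKc
      refine ⟨r, D * ∑' n : ℕ, ((2:ℝ) ^ (-β)) ^ n, ?_⟩
      intro ψ hψ hψK
      have h1 : |∑' n, f (kstar (Kn n) ψ)| ≤ ∑' n, |f (kstar (Kn n) ψ)| := by
        have := norm_tsum_le_tsum_norm (f := fun n => f (kstar (Kn n) ψ))
          (by simpa [Real.norm_eq_abs] using hsummable ψ hψ)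
        simpa [Real.norm_eq_abs] using this
      have h2 : ∑' n, |f (kstar (Kn n) ψ)|
          ≤ ∑' n, (D * ((2:ℝ) ^ (-β)) ^ n) * crNorm r ψ := by
        refine Summable.tsum_le_tsum (fun n => hD ψ hψ hψK n) (hsummable ψ hψ) ?_
        have hS : Summable (fun n : ℕ => (D * ((2:ℝ) ^ (-β)) ^ n) * crNorm r ψ) :=
          Summable.congr (hqsum.mul_left (D * crNorm r ψ)) (fun n => by ring)
        exact hS
      have h3 : ∑' n, (D * ((2:ℝ) ^ (-β)) ^ n) * crNorm r ψ
          = (D * ∑' n : ℕ, ((2:ℝ) ^ (-β)) ^ n) * crNorm r ψ := by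
        rw [show (fun n : ℕ => (D * ((2:ℝ) ^ (-β)) ^ n) * crNorm r ψ)
            = fun n : ℕ => (D * crNorm r ψ) * ((2:ℝ) ^ (-β)) ^ n from
          funext (fun n => by ring)]
        rw [tsum_mul_left]
        ring
      linarith
    · intro ψ hψ
      exact (hsummable' ψ hψ).hasSum
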